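/- arXiv:math/9609209 — 2 statements merged into one kernel-verified Lean document; each statement's English description precedes it below -/
import Mathlib

section
/- Let Y be a δ-hyperbolic geodesic metric space, μ₁ a geodesic segment joining a and b, p ∈ Y, and q a point on μ₁ nearest to p. Let φ : Y → Y be a (K,ε)-quasi-isometry, μ₂ a geodesic segment joining φ(a) and φ(b), and r a point on μ₂ nearest to φ(p). Then d(r, φ(q)) ≤ C₄, where C₄ depends only on K, ε and δ. In other words, quasi-isometries coarsely commute with nearest-point projections onto geodesics. -/
open Metric Set Filter

/-- A geodesic parametrization from `a` to `b`, defined on `[0, dist a b]`. -/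
def IsGeodParam {Y : Type*} [MetricSpace Y] (f : ℝ → Y) (a b : Y) : Prop :=
  f 0 = a ∧ f (dist a b) = b ∧
    ∀ s ∈ Set.Icc (0:ℝ) (dist a b), ∀ t ∈ Set.Icc (0:ℝ) (dist a b),
      dist (f s) (f t) = |s - t|

/-- `σ` is a geodesic segment joining `a` and `b`. -/
def IsGeodSeg {Y : Type*} [MetricSpace Y] (σ : Set Y) (a b : Y) : Prop :=
  ∃ f, IsGeodParam f a b ∧ σ = f '' Set.Icc 0 (dist a b)

/-- A geodesic metric space. -/
def GeodesicSpace (Y : Type*) [MetricSpace Y] : Prop :=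
  ∀ a b : Y, ∃ σ : Set Y, IsGeodSeg σ a b

/-- Gromov δ-hyperbolicity via slim triangles. -/
def SlimTriangles (Y : Type*) [MetricSpace Y] (δ : ℝ) : Prop :=
  ∀ a b c : Y, ∀ s₁ s₂ s₃ : Set Y, IsGeodSeg s₁ a b → IsGeodSeg s₂ b c →
    IsGeodSeg s₃ a c → ∀ x ∈ s₃, ∃ y ∈ s₁ ∪ s₂, dist x y ≤ δ

/-- The Gromov product `(a,b)_c`. -/
noncomputable def gromovProd {Y : Type*} [MetricSpace Y] (c a b : Y) : ℝ :=
  (dist a c + dist b c - dist a b) / 2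

/-- `q` is a point of `σ` nearest to `p`. -/
def IsNearestPt {Y : Type*} [MetricSpace Y] (σ : Set Y) (p q : Y) : Prop :=
  q ∈ σ ∧ ∀ z ∈ σ, dist p q ≤ dist p z

/-- A `(K,ε)`-quasigeodesic (quasi-isometric embedding of an interval `I ⊆ ℝ`). -/
def QuasiGeodesicOn {Y : Type*} [MetricSpace Y] (K ε : ℝ) (f : ℝ → Y) (I : Set ℝ) : Prop :=
  ∀ s ∈ I, ∀ t ∈ I, |s - t| / K - ε ≤ dist (f s) (f t) ∧ dist (f s) (f t) ≤ K * |s - t| + ε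

/-- A `(K,ε)`-quasi-isometric embedding. -/
def QIEmbedding {Y Z : Type*} [MetricSpace Y] [MetricSpace Z] (K ε : ℝ) (f : Y → Z) : Prop :=
  ∀ x y : Y, dist x y / K - ε ≤ dist (f x) (f y) ∧ dist (f x) (f y) ≤ K * dist x y + ε

section Lemmas
variable {Y : Type*} [MetricSpace Y] {σ : Set Y} {a b : Y}

lemma gromovProd_comm (c a b : Y) : gromovProd c a b = gromovProd c b a := by
  unfold gromovProd; rw [dist_comm a b]; ring

lemma gromovProd_add (x z₁ z₂ : Y) :
    gromovProd z₁ x z₂ + gromovProd z₂ x z₁ = dist z₁ z₂ := by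
  unfold gromovProd
  rw [dist_comm z₁ z₂, dist_comm x z₁, dist_comm x z₂]
  ring

lemma geod_mem_left (h : IsGeodSeg σ a b) : a ∈ σ := by
  obtain ⟨f, ⟨h0, hL, _⟩, rfl⟩ := h
  exact ⟨0, ⟨le_refl _, dist_nonneg⟩, h0⟩

lemma geod_mem_right (h : IsGeodSeg σ a b) : b ∈ σ := by
  obtain ⟨f, ⟨h0, hL, _⟩, rfl⟩ := h
  exact ⟨dist a b, ⟨dist_nonneg, le_refl _⟩, hL⟩

lemma geod_dist_add (h : IsGeodSeg σ a b) {x : Y} (hx : x ∈ σ) :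
    dist a x + dist x b = dist a b := by
  obtain ⟨f, ⟨h0, hL, hd⟩, rfl⟩ := h
  obtain ⟨t, ht, rfl⟩ := hx
  have h1 : dist a (f t) = |0 - t| := by
    rw [← h0]; exact hd 0 ⟨le_refl _, dist_nonneg⟩ t ht
  have h2 : dist (f t) b = |t - dist a b| := by
    have := hd t ht (dist a b) ⟨dist_nonneg, le_refl _⟩
    rwa [hL] at this
  rw [h1, h2, abs_of_nonpos (by linarith [ht.1]), abs_of_nonpos (by linarith [ht.2])]
  ring

lemma geod_compact (h : IsGeodSeg σ a b) : IsCompact σ := by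
  obtain ⟨f, ⟨h0, hL, hd⟩, rfl⟩ := h
  apply IsCompact.image_of_continuousOn isCompact_Icc
  have : LipschitzOnWith 1 f (Set.Icc 0 (dist a b)) := by
    apply LipschitzOnWith.of_dist_le_mul
    intro s hs t ht
    rw [hd s hs t ht, NNReal.coe_one, one_mul, Real.dist_eq]
  exact this.continuousOn

lemma geod_nonempty (h : IsGeodSeg σ a b) : σ.Nonempty := ⟨a, geod_mem_left h⟩

lemma exists_nearest (h : IsGeodSeg σ a b) (p : Y) : ∃ q, IsNearestPt σ p q := by
  obtain ⟨q, hq, hmin⟩ :=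
    (geod_compact h).exists_isMinOn (geod_nonempty h)
      (continuous_const.dist continuous_id).continuousOn (f := fun z => dist p z)
  exact ⟨q, hq, fun z hz => hmin hz⟩

/-- L1: Gromov product is at most the distance to any point of a geodesic joining them. -/
lemma gromovProd_le_dist_mem (h : IsGeodSeg σ a b) {x : Y} (hx : x ∈ σ) (z : Y) :
    gromovProd z a b ≤ dist z x := by
  have h1 := geod_dist_add h hx
  have t1 := dist_triangle a x z
  have t2 := dist_triangle b x z
  unfold gromovProd
  have e1 : dist a z ≤ dist a x + dist x z := dist_triangle a x z
  have e2 : dist b z ≤ dist b x + dist x z := dist_triangle b x z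
  rw [dist_comm b x] at e2
  rw [dist_comm x z] at e1 e2
  linarith

end Lemmas
section Lemmas2
variable {Y : Type*} [MetricSpace Y] {σ : Set Y} {a b : Y} {δ : ℝ}

/-- Subsegment of a geodesic is a geodesic segment contained in it. -/
lemma geod_subseg {f : ℝ → Y} (hf : IsGeodParam f a b) {u v : ℝ}
    (hu : u ∈ Set.Icc 0 (dist a b)) (hv : v ∈ Set.Icc 0 (dist a b)) (huv : u ≤ v) :
    IsGeodSeg (f '' Set.Icc u v) (f u) (f v) ∧ f '' Set.Icc u v ⊆ f '' Set.Icc 0 (dist a b) := by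
  obtain ⟨h0, hL, hd⟩ := hf
  have hsub : Set.Icc u v ⊆ Set.Icc 0 (dist a b) := Set.Icc_subset_Icc hu.1 hv.2
  have hduv : dist (f u) (f v) = v - u := by
    rw [hd u hu v hv, abs_of_nonpos (by linarith)]; ring
  constructor
  · refine ⟨fun s => f (s + u), ⟨by simp, by rw [hduv]; ring_nf, ?_⟩, ?_⟩
    · intro s hs t ht
      rw [hduv] at hs ht
      have hs' : s + u ∈ Set.Icc 0 (dist a b) := ⟨by linarith [hs.1, hu.1], by linarith [hs.2, hv.2]⟩
      have ht' : t + u ∈ Set.Icc 0 (dist a b) := ⟨by linarith [ht.1, hu.1], by linarith [ht.2, hv.2]⟩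
      rw [hd _ hs' _ ht']
      congr 1; ring
    · rw [hduv]
      ext y
      simp only [Set.mem_image]
      constructor
      · rintro ⟨s, hs, rfl⟩
        exact ⟨s - u, ⟨by linarith [hs.1], by linarith [hs.2]⟩, by ring_nf⟩
      · rintro ⟨s, hs, rfl⟩
        exact ⟨s + u, ⟨by linarith [hs.1], by linarith [hs.2]⟩, rfl⟩
  · exact Set.image_mono hsub

/-- P1: there is a point on any geodesic joining `x z` within `(x,z)_w + 2δ` of `w`. -/
lemma exists_near_gromovProd (hG : GeodesicSpace Y) (hS : SlimTriangles Y δ)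
    {x z : Y} (h : IsGeodSeg σ x z) (w : Y) :
    ∃ m ∈ σ, dist w m ≤ gromovProd w x z + 2 * δ := by
  obtain ⟨s₁, hs₁⟩ := hG x w
  obtain ⟨s₂, hs₂⟩ := hG w z
  obtain ⟨f, hf, rfl⟩ := h
  have cxz : dist x z = dist z x := dist_comm _ _
  have cxw : dist x w = dist w x := dist_comm _ _
  have czw : dist z w = dist w z := dist_comm _ _
  set t := (dist x z + dist x w - dist z w)/2 with htdef
  have ht0 : 0 ≤ t := by
    have := dist_triangle z x w
    rw [← cxz] at this
    simp only [htdef]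
    linarith
  have htL : t ≤ dist x z := by
    have := dist_triangle x z w
    simp only [htdef]
    linarith
  have hmem : t ∈ Set.Icc (0:ℝ) (dist x z) := ⟨ht0, htL⟩
  have hmσ : f t ∈ f '' Set.Icc 0 (dist x z) := ⟨t, hmem, rfl⟩
  have hdxm : dist x (f t) = t := by
    have h1 := hf.2.2 0 ⟨le_refl _, dist_nonneg⟩ t hmem
    rw [hf.1] at h1
    rw [h1, zero_sub, abs_neg, abs_of_nonneg ht0]
  have hdzm : dist (f t) z = dist x z - t := by
    have h1 := hf.2.2 t hmem (dist x z) ⟨dist_nonneg, le_refl _⟩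
    rw [hf.2.1] at h1
    rw [h1, abs_of_nonpos (by linarith)]
    ring
  obtain ⟨y, hy, hdy⟩ := hS x w z s₁ s₂ _ hs₁ hs₂ ⟨f, hf, rfl⟩ (f t) hmσ
  have hgp : gromovProd w x z = (dist x w + dist z w - dist x z)/2 := by
    unfold gromovProd
    linarith
  have hdy' : dist y (f t) ≤ δ := by rw [dist_comm]; exact hdy
  refine ⟨f t, hmσ, ?_⟩
  have htri : dist w (f t) ≤ dist w y + dist y (f t) := dist_triangle _ _ _
  rcases hy with hy | hy
  · have hsum := geod_dist_add hs₁ hy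
    have h1 : t ≤ dist x y + δ := by
      calc t = dist x (f t) := hdxm.symm
      _ ≤ dist x y + dist y (f t) := dist_triangle _ _ _
      _ ≤ dist x y + δ := by linarith
    have cwy : dist w y = dist y w := dist_comm _ _
    linarith
  · have hsum := geod_dist_add hs₂ hy
    have h1 : dist x z - t ≤ δ + dist y z := by
      calc dist x z - t = dist (f t) z := hdzm.symm
      _ ≤ dist (f t) y + dist y z := dist_triangle _ _ _
      _ ≤ δ + dist y z := by linarith
    linarith

end Lemmas2
section Lemmas3
variable {Y : Type*} [MetricSpace Y] {σ : Set Y} {δ : ℝ}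

/-- Four-point condition (Gromov product form) with constant 3δ. -/
lemma fourpt (hG : GeodesicSpace Y) (hS : SlimTriangles Y δ) (w x y z : Y) :
    min (gromovProd w x y) (gromovProd w y z) - 3 * δ ≤ gromovProd w x z := by
  obtain ⟨s₁, hs₁⟩ := hG x y
  obtain ⟨s₂, hs₂⟩ := hG y z
  obtain ⟨s₃, hs₃⟩ := hG x z
  obtain ⟨m, hm⟩ := exists_nearest hs₃ w
  obtain ⟨m', hm', hdm'⟩ := exists_near_gromovProd hG hS hs₃ w
  have h1 : dist w m ≤ gromovProd w x z + 2 * δ := le_trans (hm.2 m' hm') hdm'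
  obtain ⟨y', hy', hdy'⟩ := hS x y z s₁ s₂ s₃ hs₁ hs₂ hs₃ m hm.1
  have h2 : dist w y' ≤ dist w m + δ := by
    have := dist_triangle w m y'
    have c : dist m y' = dist y' m := dist_comm _ _
    linarith [dist_triangle w m y']
  rcases hy' with hy' | hy'
  · have := gromovProd_le_dist_mem hs₁ hy' w
    have hmin : min (gromovProd w x y) (gromovProd w y z) ≤ gromovProd w x y := min_le_left _ _
    linarith
  · have := gromovProd_le_dist_mem hs₂ hy' w
    have hmin : min (gromovProd w x y) (gromovProd w y z) ≤ gromovProd w y z := min_le_right _ _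
    linarith

/-- Four-point condition, quadruple form, constant 6δ. -/
lemma fourpt_quad (hG : GeodesicSpace Y) (hS : SlimTriangles Y δ) (a b c d : Y) :
    dist a c + dist b d ≤ max (dist a b + dist c d) (dist a d + dist b c) + 6 * δ := by
  have h := fourpt hG hS d a b c
  rcases min_cases (gromovProd d a b) (gromovProd d b c) with ⟨he, _⟩ | ⟨he, _⟩ <;>
      rw [he] at h <;> unfold gromovProd at h
  · calc dist a c + dist b d ≤ (dist a b + dist c d) + 6 * δ := by linarith
    _ ≤ max (dist a b + dist c d) (dist a d + dist b c) + 6 * δ :=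
        add_le_add_left (le_max_left _ _) _
  · calc dist a c + dist b d ≤ (dist a d + dist b c) + 6 * δ := by linarith
    _ ≤ max (dist a b + dist c d) (dist a d + dist b c) + 6 * δ :=
        add_le_add_left (le_max_right _ _) _

/-- P2: a nearest point `q` on a geodesic is taut: `d(p,z) ≥ d(p,q) + d(q,z) - 4δ`. -/
lemma nearest_taut (hG : GeodesicSpace Y) (hS : SlimTriangles Y δ) {a b p q z : Y}
    (h : IsGeodSeg σ a b) (hq : IsNearestPt σ p q) (hz : z ∈ σ) :
    dist p q + dist q z - 4 * δ ≤ dist p z := by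
  obtain ⟨f, hf, rfl⟩ := h
  obtain ⟨u, hu, hqu⟩ := hq.1
  obtain ⟨v, hv, hzv⟩ := hz
  rcases le_total u v with huv | huv
  · obtain ⟨hseg, hsub⟩ := geod_subseg hf hu hv huv
    rw [hqu, hzv] at hseg
    obtain ⟨m, hm, hdm⟩ := exists_near_gromovProd hG hS hseg p
    have hmem : m ∈ f '' Set.Icc 0 (dist a b) := hsub hm
    have h1 : dist p q ≤ dist p m := hq.2 m hmem
    unfold gromovProd at hdm
    have c1 : dist q p = dist p q := dist_comm _ _
    have c2 : dist z p = dist p z := dist_comm _ _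
    linarith
  · obtain ⟨hseg, hsub⟩ := geod_subseg hf hv hu huv
    rw [hqu, hzv] at hseg
    obtain ⟨m, hm, hdm⟩ := exists_near_gromovProd hG hS hseg p
    have hmem : m ∈ f '' Set.Icc 0 (dist a b) := hsub hm
    have h1 : dist p q ≤ dist p m := hq.2 m hmem
    unfold gromovProd at hdm
    have c1 : dist q p = dist p q := dist_comm _ _
    have c2 : dist z p = dist p z := dist_comm _ _
    have c3 : dist z q = dist q z := dist_comm _ _
    linarith

end Lemmas3
section Lemmas4
variable {Y : Type*} [MetricSpace Y] {σ : Set Y} {δ : ℝ}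

/-- Contraction: projections of nearby points onto a geodesic are 14δ-close. -/
lemma proj_contract (hG : GeodesicSpace Y) (hS : SlimTriangles Y δ) (hδ : 0 ≤ δ) {a b x y px py : Y}
    (h : IsGeodSeg σ a b) (hx : IsNearestPt σ x px) (hy : IsNearestPt σ y py)
    (hd : dist x y ≤ dist x px + dist y py) : dist px py ≤ 14 * δ := by
  have P1 := nearest_taut hG hS h hx hy.1
  have P2 := nearest_taut hG hS h hy hx.1
  have Q := fourpt_quad hG hS x y py px
  have c1 : dist py px = dist px py := dist_comm _ _
  have c2 : dist y px = dist px y := dist_comm _ _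
  rcases max_cases (dist x y + dist py px) (dist x px + dist y py) with ⟨he, _⟩ | ⟨he, _⟩ <;>
    rw [he] at Q
  · linarith
  · linarith

/-- Two points with small Gromov products w.r.t. all three sides of a triangle are close. -/
lemma center_close (hG : GeodesicSpace Y) (hS : SlimTriangles Y δ) (hδ : 0 ≤ δ)
    {w a' b' z₁ z₂ : Y} {c₁ c₂ : ℝ}
    (h1 : gromovProd z₁ a' b' ≤ c₁) (h2 : gromovProd z₁ w a' ≤ c₁)
    (h3 : gromovProd z₁ w b' ≤ c₁)
    (h1' : gromovProd z₂ a' b' ≤ c₂) (h2' : gromovProd z₂ w a' ≤ c₂)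
    (h3' : gromovProd z₂ w b' ≤ c₂) :
    dist z₁ z₂ ≤ c₁ + c₂ + 6 * δ := by
  classical
  -- two of A B W are ≤ c₁ + 3δ, where A = (a',z₂)_{z₁}, B = (b',z₂)_{z₁}, W = (w,z₂)_{z₁}
  have two₁ : ∀ (u v : Y), gromovProd z₁ u v ≤ c₁ →
      gromovProd z₁ u z₂ ≤ c₁ + 3 * δ ∨ gromovProd z₁ v z₂ ≤ c₁ + 3 * δ := by
    intro u v huv
    have := fourpt hG hS z₁ u z₂ v
    rcases min_cases (gromovProd z₁ u z₂) (gromovProd z₁ z₂ v) with ⟨he, _⟩ | ⟨he, _⟩ <;>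
      rw [he] at this
    · left; linarith
    · right; rw [gromovProd_comm]; linarith
  have two₂ : ∀ (u v : Y), gromovProd z₂ u v ≤ c₂ →
      gromovProd z₂ u z₁ ≤ c₂ + 3 * δ ∨ gromovProd z₂ v z₁ ≤ c₂ + 3 * δ := by
    intro u v huv
    have := fourpt hG hS z₂ u z₁ v
    rcases min_cases (gromovProd z₂ u z₁) (gromovProd z₂ z₁ v) with ⟨he, _⟩ | ⟨he, _⟩ <;>
      rw [he] at this
    · left; linarith
    · right; rw [gromovProd_comm]; linarith
  -- final: find common letter
  have key : ∀ u : Y, gromovProd z₁ u z₂ ≤ c₁ + 3 * δ → gromovProd z₂ u z₁ ≤ c₂ + 3 * δ →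
      dist z₁ z₂ ≤ c₁ + c₂ + 6 * δ := by
    intro u hu hu'
    have := gromovProd_add u z₁ z₂
    linarith
  have tA := two₁ a' b' h1
  have tB := two₁ w a' h2
  have tC := two₁ w b' h3
  have tA' := two₂ a' b' h1'
  have tB' := two₂ w a' h2'
  have tC' := two₂ w b' h3'
  -- letters: a', b', w at z₁ and z₂
  by_cases hA : gromovProd z₁ a' z₂ ≤ c₁ + 3 * δ
  · by_cases hA' : gromovProd z₂ a' z₁ ≤ c₂ + 3 * δ
    · exact key a' hA hA'
    · -- at z₂: from tA' get b' small; from tB' get w small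
      have hB' : gromovProd z₂ b' z₁ ≤ c₂ + 3 * δ := tA'.resolve_left hA'
      have hW' : gromovProd z₂ w z₁ ≤ c₂ + 3 * δ := tB'.resolve_right hA'
      -- at z₁: from tC, b' or w small
      rcases tC with hW | hB
      · exact key w hW hW'
      · exact key b' hB hB'
  · have hB : gromovProd z₁ b' z₂ ≤ c₁ + 3 * δ := tA.resolve_left hA
    have hW : gromovProd z₁ w z₂ ≤ c₁ + 3 * δ := tB.resolve_right hA
    rcases tC' with hW' | hB'
    · exact key w hW hW'
    · exact key b' hB hB'

end Lemmas4
noncomputable def morseLam (δ K ε : ℝ) : ℝ := 2*K^2*(14*δ+1) + ε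

noncomputable def morseB (δ K ε : ℝ) : ℝ :=
  2*(morseLam δ K ε) + 2*K^2*(4*(morseLam δ K ε)+ε) + ε

noncomputable def morseH (δ K ε : ℝ) : ℝ := morseLam δ K ε + morseB δ K ε

section Morse
variable {Y : Type*} [MetricSpace Y] {δ K ε : ℝ}

set_option maxHeartbeats 1000000 in
lemma morse (hG : GeodesicSpace Y) (hS : SlimTriangles Y δ)
    (hδ : 0 ≤ δ) (hK : 1 ≤ K) (hε : 0 ≤ ε)
    {f : ℝ → Y} {a b : Y} (hf : IsGeodParam f a b)
    {φ : Y → Y} (hφ : QIEmbedding K ε φ)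
    {σ₂ : Set Y} (h₂ : IsGeodSeg σ₂ (φ a) (φ b)) :
    ∀ t ∈ Set.Icc (0:ℝ) (dist a b), ∃ m ∈ σ₂, dist (φ (f t)) m ≤ morseH δ K ε := by
  classical
  have hK0 : 0 < K := lt_of_lt_of_le one_pos hK
  obtain ⟨L, hLdef⟩ : ∃ x : ℝ, x = dist a b := ⟨_, rfl⟩
  have hL0 : 0 ≤ L := hLdef ▸ dist_nonneg
  obtain ⟨C₂, hC2def⟩ : ∃ x : ℝ, x = 14*δ + 1 := ⟨_, rfl⟩
  have hC2pos : 0 < C₂ := by rw [hC2def]; linarith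
  obtain ⟨Δ, hΔdef⟩ : ∃ x : ℝ, x = 2*K*C₂ := ⟨_, rfl⟩
  have hΔpos : 0 < Δ := by rw [hΔdef]; positivity
  obtain ⟨lam, hlamdef⟩ : ∃ x : ℝ, x = K*Δ + ε := ⟨_, rfl⟩
  have hlampos : 0 < lam := by rw [hlamdef]; positivity
  have hlam_eq : lam = morseLam δ K ε := by
    rw [hlamdef, hΔdef, hC2def, morseLam]; ring
  have hIcc : Set.Icc (0:ℝ) (dist a b) = Set.Icc 0 L := by rw [hLdef]
  rw [hIcc]
  have gub : ∀ s ∈ Set.Icc (0:ℝ) L, ∀ u ∈ Set.Icc (0:ℝ) L,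
      dist (φ (f s)) (φ (f u)) ≤ K*|s-u| + ε := by
    intro s hs u hu
    rw [hLdef] at hs hu
    have h := (hφ (f s) (f u)).2
    rwa [hf.2.2 s hs u hu] at h
  have glb : ∀ s ∈ Set.Icc (0:ℝ) L, ∀ u ∈ Set.Icc (0:ℝ) L,
      |s-u|/K - ε ≤ dist (φ (f s)) (φ (f u)) := by
    intro s hs u hu
    rw [hLdef] at hs hu
    have h := (hφ (f s) (f u)).1
    rwa [hf.2.2 s hs u hu] at h
  have hfa : f 0 = a := hf.1
  have hfb : f L = b := by rw [hLdef]; exact hf.2.1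
  obtain ⟨n, hndef⟩ : ∃ m : ℕ, m = ⌈L/Δ⌉₊ := ⟨_, rfl⟩
  obtain ⟨T, hTdef⟩ : ∃ T : ℕ → ℝ, T = fun i : ℕ => min ((i:ℝ)*Δ) L := ⟨_, rfl⟩
  have hTmem : ∀ i : ℕ, T i ∈ Set.Icc (0:ℝ) L := by
    intro i
    simp only [hTdef]
    exact ⟨le_min (by positivity) hL0, min_le_right _ _⟩
  have hTmono : ∀ i j : ℕ, i ≤ j → T i ≤ T j := by
    intro i j hij
    simp only [hTdef]
    exact min_le_min (mul_le_mul_of_nonneg_right (by exact_mod_cast hij) hΔpos.le) (le_refl _)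
  have hTgap : ∀ i : ℕ, T (i+1) ≤ T i + Δ := by
    intro i
    simp only [hTdef]
    show min (((i+1:ℕ):ℝ)*Δ) L ≤ min ((i:ℝ)*Δ) L + Δ
    rcases le_total ((i:ℝ)*Δ) L with hc | hc
    · rw [min_eq_left hc]
      calc min (((i+1:ℕ):ℝ)*Δ) L ≤ ((i+1:ℕ):ℝ)*Δ := min_le_left _ _
      _ = (i:ℝ)*Δ + Δ := by
            have : ((i+1:ℕ):ℝ) = (i:ℝ)+1 := by push_cast; ring
            rw [this]; ring
    · rw [min_eq_right hc]
      calc min (((i+1:ℕ):ℝ)*Δ) L ≤ L := min_le_right _ _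
      _ ≤ L + Δ := by linarith
  have hT0 : T 0 = 0 := by
    simp only [hTdef, Nat.cast_zero, zero_mul]
    exact min_eq_left hL0
  have hTn : T n = L := by
    have h1 : L ≤ (n:ℝ)*Δ := by
      rw [hndef]
      exact (div_le_iff₀ hΔpos).mp (Nat.le_ceil _)
    simp only [hTdef]
    exact min_eq_right h1
  have hch : ∀ i : ℕ, ∃ m, IsNearestPt σ₂ (φ (f (T i))) m := fun i => exists_nearest h₂ _
  choose π hπ using hch
  obtain ⟨d, hddef⟩ : ∃ d : ℕ → ℝ, d = fun i : ℕ => dist (φ (f (T i))) (π i) := ⟨_, rfl⟩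
  have hd_nonneg : ∀ i, 0 ≤ d i := by intro i; simp only [hddef]; exact dist_nonneg
  have hd0 : d 0 ≤ 0 := by
    simp only [hddef]
    show dist (φ (f (T 0))) (π 0) ≤ 0
    calc dist (φ (f (T 0))) (π 0) ≤ dist (φ (f (T 0))) (φ a) :=
          (hπ 0).2 _ (geod_mem_left h₂)
    _ = 0 := by rw [hT0, hfa, dist_self]
  have hdn : d n ≤ 0 := by
    simp only [hddef]
    show dist (φ (f (T n))) (π n) ≤ 0
    calc dist (φ (f (T n))) (π n) ≤ dist (φ (f (T n))) (φ b) :=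
          (hπ n).2 _ (geod_mem_right h₂)
    _ = 0 := by rw [hTn, hfb, dist_self]
  have hstep : ∀ i : ℕ, dist (φ (f (T i))) (φ (f (T (i+1)))) ≤ lam := by
    intro i
    have h1 := gub (T i) (hTmem i) (T (i+1)) (hTmem (i+1))
    have h2 : |T i - T (i+1)| ≤ Δ := by
      rw [abs_le]
      exact ⟨by linarith [hTgap i], by linarith [hTmono i (i+1) (Nat.le_succ i), hΔpos]⟩
    rw [hlamdef]
    calc dist (φ (f (T i))) (φ (f (T (i+1)))) ≤ K*|T i - T (i+1)| + ε := h1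
    _ ≤ K*Δ + ε := add_le_add_left (mul_le_mul_of_nonneg_left h2 hK0.le) ε
  have hdlip : ∀ i : ℕ, d (i+1) ≤ d i + lam ∧ d i ≤ d (i+1) + lam := by
    intro i
    simp only [hddef]
    constructor
    · calc dist (φ (f (T (i+1)))) (π (i+1)) ≤ dist (φ (f (T (i+1)))) (π i) :=
            (hπ (i+1)).2 _ (hπ i).1
      _ ≤ dist (φ (f (T (i+1)))) (φ (f (T i))) + dist (φ (f (T i))) (π i) :=
            dist_triangle _ _ _
      _ ≤ dist (φ (f (T i))) (π i) + lam := by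
            rw [dist_comm (φ (f (T (i+1))))]; linarith [hstep i]
    · calc dist (φ (f (T i))) (π i) ≤ dist (φ (f (T i))) (π (i+1)) :=
            (hπ i).2 _ (hπ (i+1)).1
      _ ≤ dist (φ (f (T i))) (φ (f (T (i+1)))) + dist (φ (f (T (i+1)))) (π (i+1)) :=
            dist_triangle _ _ _
      _ ≤ dist (φ (f (T (i+1)))) (π (i+1)) + lam := by linarith [hstep i]
  have hmain : ∀ i₀ : ℕ, i₀ ≤ n → d i₀ ≤ morseB δ K ε := by
    intro i₀ hi₀n
    have hBlam : lam ≤ morseB δ K ε := by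
      rw [morseB, ← hlam_eq]
      have h0 : 0 ≤ 2*K^2*(4*lam+ε) :=
        mul_nonneg (by positivity) (by linarith)
      linarith
    by_cases hsmall : d i₀ < lam
    · linarith
    push_neg at hsmall
    have hP0 : d 0 < lam := by linarith [hd0]
    have hPn : d n < lam := by linarith [hdn]
    obtain ⟨i₁, hi₁def⟩ : ∃ m : ℕ, m = Nat.findGreatest (fun i => d i < lam) i₀ := ⟨_, rfl⟩
    have hPi₁ : d i₁ < lam := by
      rw [hi₁def]
      exact Nat.findGreatest_spec (P := fun i => d i < lam) (Nat.zero_le i₀) hP0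
    have hi₁le : i₁ ≤ i₀ := hi₁def ▸ Nat.findGreatest_le i₀
    have hi₁lt : i₁ < i₀ := by
      rcases lt_or_eq_of_le hi₁le with h | h
      · exact h
      · exfalso; rw [h] at hPi₁; linarith
    have hnotP : ∀ k, i₁ < k → k ≤ i₀ → lam ≤ d k := by
      intro k h1 h2
      rw [hi₁def] at h1
      have := Nat.findGreatest_is_greatest h1 h2
      simpa using not_lt.mp this
    have hex : ∃ j, i₀ ≤ j ∧ d j < lam := ⟨n, hi₀n, hPn⟩
    obtain ⟨i₂, hi₂def⟩ : ∃ m : ℕ, m = Nat.find hex := ⟨_, rfl⟩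
    have hi₂spec : i₀ ≤ i₂ ∧ d i₂ < lam := hi₂def ▸ Nat.find_spec hex
    have hi₂le : i₂ ≤ n := hi₂def ▸ Nat.find_le ⟨hi₀n, hPn⟩
    have hi₂gt : i₀ < i₂ := by
      rcases lt_or_eq_of_le hi₂spec.1 with h | h
      · exact h
      · exfalso; rw [← h] at hi₂spec; linarith [hi₂spec.2]
    have hmid : ∀ j, i₁ < j → j < i₂ → lam ≤ d j := by
      intro j h1 h2
      rcases le_or_gt j i₀ with h3 | h3
      · exact hnotP j h1 h3
      · by_contra h4
        push_neg at h4
        rw [hi₂def] at h2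
        exact Nat.find_min hex h2 ⟨le_of_lt h3, h4⟩
    obtain ⟨j₁, hj₁def⟩ : ∃ m : ℕ, m = i₁ + 1 := ⟨_, rfl⟩
    obtain ⟨j₂, hj₂def⟩ : ∃ m : ℕ, m = i₂ - 1 := ⟨_, rfl⟩
    have hj₂succ : j₂ + 1 = i₂ := by omega
    have hj₁j₂ : j₁ ≤ j₂ := by omega
    have hi₀j₂ : i₀ ≤ j₂ := by omega
    have hj₂n : j₂ < n := by omega
    have huntr : ∀ j : ℕ, j < n → T j = (j:ℝ)*Δ := by
      intro j hj
      rw [hndef] at hj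
      have h1 : (j:ℝ) < L/Δ := Nat.lt_ceil.mp hj
      have h2 : (j:ℝ)*Δ ≤ L := le_of_lt ((lt_div_iff₀ hΔpos).mp h1)
      simp only [hTdef]
      exact min_eq_left h2
    have hchain : ∀ k : ℕ, j₁ + k ≤ j₂ → dist (π j₁) (π (j₁ + k)) ≤ (k:ℝ) * C₂ := by
      intro k
      induction k with
      | zero => intro _; simp
      | succ m ih =>
        intro hk
        have h1 := ih (by omega)
        have hcontr : dist (π (j₁+m)) (π (j₁+m+1)) ≤ 14*δ := by
          apply proj_contract hG hS hδ h₂ (hπ (j₁+m)) (hπ (j₁+m+1))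
          have hd1 : lam ≤ d (j₁+m) := hmid _ (by omega) (by omega)
          have hd2 : 0 ≤ d (j₁+m+1) := hd_nonneg _
          simp only [hddef] at hd1 hd2
          calc dist (φ (f (T (j₁+m)))) (φ (f (T (j₁+m+1)))) ≤ lam := hstep _
          _ ≤ _ := by exact le_add_of_le_of_nonneg hd1 hd2
        calc dist (π j₁) (π (j₁ + (m+1)))
            ≤ dist (π j₁) (π (j₁+m)) + dist (π (j₁+m)) (π (j₁+m+1)) := by
              have he : j₁ + (m+1) = j₁ + m + 1 := by omega
              rw [he]; exact dist_triangle _ _ _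
        _ ≤ (m:ℝ)*C₂ + 14*δ := by linarith
        _ ≤ ((m+1:ℕ):ℝ)*C₂ := by
              have hcc : ((m+1:ℕ):ℝ)*C₂ = (m:ℝ)*C₂ + C₂ := by push_cast; ring
              rw [hcc, hC2def]; linarith
    obtain ⟨N, hNdef⟩ : ∃ m : ℕ, m = j₂ - j₁ := ⟨_, rfl⟩
    have hNadd : j₁ + N = j₂ := by omega
    have hTdiff : T j₂ - T j₁ = (N:ℝ)*Δ := by
      rw [huntr j₁ (by omega), huntr j₂ hj₂n]
      have hc : (N:ℝ) = (j₂:ℝ) - (j₁:ℝ) := by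
        rw [hNdef]; push_cast [Nat.cast_sub hj₁j₂]; ring
      rw [hc]; ring
    have hedge1 : d j₁ ≤ 2*lam := by
      have h1 := (hdlip i₁).1
      rw [hj₁def]
      linarith
    have hedge2 : d j₂ ≤ 2*lam := by
      have h1 := (hdlip j₂).2
      rw [hj₂succ] at h1
      linarith [hi₂spec.2]
    have hlow : (N:ℝ)*Δ/K - ε ≤ dist (φ (f (T j₁))) (φ (f (T j₂))) := by
      have h := glb (T j₁) (hTmem j₁) (T j₂) (hTmem j₂)
      have habs : |T j₁ - T j₂| = (N:ℝ)*Δ := by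
        rw [abs_sub_comm, abs_of_nonneg (by linarith [hTmono j₁ j₂ hj₁j₂])]
        exact hTdiff
      rwa [habs] at h
    have hup : dist (φ (f (T j₁))) (φ (f (T j₂))) ≤ d j₁ + (N:ℝ)*C₂ + d j₂ := by
      have h1 : dist (π j₁) (π j₂) ≤ (N:ℝ)*C₂ := by
        have h2 := hchain N (by omega)
        rwa [hNadd] at h2
      simp only [hddef]
      calc dist (φ (f (T j₁))) (φ (f (T j₂)))
          ≤ dist (φ (f (T j₁))) (π j₁) + dist (π j₁) (φ (f (T j₂))) := dist_triangle _ _ _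
      _ ≤ dist (φ (f (T j₁))) (π j₁) +
            (dist (π j₁) (π j₂) + dist (π j₂) (φ (f (T j₂)))) := by
          linarith [dist_triangle (π j₁) (π j₂) (φ (f (T j₂)))]
      _ ≤ _ := by
          rw [dist_comm (π j₂)]
          linarith
    have hNbound : (N:ℝ)*C₂ ≤ 4*lam + ε := by
      have h1 : (N:ℝ)*Δ/K = 2*((N:ℝ)*C₂) := by
        rw [hΔdef]; field_simp
      rw [h1] at hlow
      linarith
    have hfinal : d i₀ ≤ d j₁ + (K*((N:ℝ)*Δ) + ε) := by
      have h1 : dist (φ (f (T i₀))) (φ (f (T j₁))) ≤ K*((N:ℝ)*Δ) + ε := by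
        have h := gub (T i₀) (hTmem i₀) (T j₁) (hTmem j₁)
        have habs : |T i₀ - T j₁| ≤ (N:ℝ)*Δ := by
          rw [abs_of_nonneg (by linarith [hTmono j₁ i₀ (by omega)])]
          linarith [hTmono i₀ j₂ hi₀j₂, hTdiff]
        calc dist (φ (f (T i₀))) (φ (f (T j₁))) ≤ K*|T i₀ - T j₁| + ε := h
        _ ≤ K*((N:ℝ)*Δ) + ε := add_le_add_left (mul_le_mul_of_nonneg_left habs hK0.le) ε
      simp only [hddef]
      calc dist (φ (f (T i₀))) (π i₀) ≤ dist (φ (f (T i₀))) (π j₁) := (hπ i₀).2 _ (hπ j₁).1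
      _ ≤ dist (φ (f (T i₀))) (φ (f (T j₁))) + dist (φ (f (T j₁))) (π j₁) :=
            dist_triangle _ _ _
      _ ≤ _ := by linarith
    have hKNΔ : K*((N:ℝ)*Δ) = ((N:ℝ)*C₂)*(2*K^2) := by rw [hΔdef]; ring
    have hNC : ((N:ℝ)*C₂)*(2*K^2) ≤ (4*lam+ε)*(2*K^2) := by
      apply mul_le_mul_of_nonneg_right hNbound
      positivity
    have heq : (4*lam+ε)*(2*K^2) = 2*K^2*(4*lam+ε) := by ring
    rw [morseB, ← hlam_eq]
    rw [hKNΔ] at hfinal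
    linarith
  intro t ht
  obtain ⟨i, hidef⟩ : ∃ m : ℕ, m = ⌊t/Δ⌋₊ := ⟨_, rfl⟩
  have hi1 : (i:ℝ)*Δ ≤ t := by
    have h1 : (i:ℝ) ≤ t/Δ := by
      rw [hidef]; exact Nat.floor_le (div_nonneg ht.1 hΔpos.le)
    calc (i:ℝ)*Δ ≤ (t/Δ)*Δ := mul_le_mul_of_nonneg_right h1 hΔpos.le
    _ = t := div_mul_cancel₀ _ (ne_of_gt hΔpos)
  have hi2 : t - (i:ℝ)*Δ ≤ Δ := by
    have h1 : t/Δ < (i:ℝ)+1 := by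
      rw [hidef]; exact Nat.lt_floor_add_one _
    have h2 : t < ((i:ℝ)+1)*Δ := by
      calc t = (t/Δ)*Δ := (div_mul_cancel₀ _ (ne_of_gt hΔpos)).symm
      _ < ((i:ℝ)+1)*Δ := mul_lt_mul_of_pos_right h1 hΔpos
    have h3 : ((i:ℝ)+1)*Δ = (i:ℝ)*Δ + Δ := by ring
    linarith
  have hin : i ≤ n := by
    rw [hidef, hndef]
    calc ⌊t/Δ⌋₊ ≤ ⌊L/Δ⌋₊ := Nat.floor_mono (by gcongr; exact ht.2)
    _ ≤ ⌈L/Δ⌉₊ := Nat.floor_le_ceil _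
  have hTi : T i = (i:ℝ)*Δ := by
    simp only [hTdef]
    exact min_eq_left (le_trans hi1 ht.2)
  refine ⟨π i, (hπ i).1, ?_⟩
  have h1 : dist (φ (f t)) (φ (f (T i))) ≤ K*Δ + ε := by
    have h := gub t ht (T i) (hTmem i)
    have habs : |t - T i| ≤ Δ := by
      rw [hTi, abs_of_nonneg (by linarith)]
      exact hi2
    calc dist (φ (f t)) (φ (f (T i))) ≤ K*|t - T i| + ε := h
    _ ≤ K*Δ + ε := add_le_add_left (mul_le_mul_of_nonneg_left habs hK0.le) ε
  have h2 : d i ≤ morseB δ K ε := hmain i hin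
  simp only [hddef] at h2
  calc dist (φ (f t)) (π i) ≤ dist (φ (f t)) (φ (f (T i))) + dist (φ (f (T i))) (π i) :=
        dist_triangle _ _ _
  _ ≤ (K*Δ + ε) + morseB δ K ε := by linarith
  _ = morseH δ K ε := by rw [morseH, ← hlam_eq, hlamdef]

end Morse

/-- Quasi-isometries of a δ-hyperbolic geodesic space coarsely commute with
nearest-point projections onto geodesic segments. -/
theorem stmt3 (δ K ε : ℝ) (hδ : 0 ≤ δ) (hK : 1 ≤ K) (hε : 0 ≤ ε) :
    ∃ C₄ : ℝ,
      ∀ (Y : Type) (_ : MetricSpace Y), GeodesicSpace Y → SlimTriangles Y δ →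
        ∀ (μ₁ μ₂ : Set Y) (a b p q r : Y) (φ : Y → Y),
          IsGeodSeg μ₁ a b → IsNearestPt μ₁ p q →
          QIEmbedding K ε φ → (∀ z : Y, ∃ y : Y, dist z (φ y) ≤ ε) →
          IsGeodSeg μ₂ (φ a) (φ b) → IsNearestPt μ₂ (φ p) r →
            dist r (φ q) ≤ C₄ := by
  have hK0 : 0 < K := lt_of_lt_of_le one_pos hK
  refine ⟨(morseH δ K ε + 4*K*δ + ε) + 2*δ + 6*δ, ?_⟩
  intro Y _ hG hS μ₁ μ₂ a b p q r φ h₁ hq hφ _ h₂ hr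
  -- Gromov products at r are small
  have hr1 : gromovProd r (φ a) (φ b) ≤ 2*δ := by
    have := gromovProd_le_dist_mem h₂ hr.1 r
    simp only [dist_self] at this
    linarith
  have hr2 : gromovProd r (φ p) (φ a) ≤ 2*δ := by
    have h := nearest_taut hG hS h₂ hr (geod_mem_left h₂)
    unfold gromovProd
    have c1 : dist (φ p) r = dist r (φ p) := dist_comm _ _
    have c2 : dist (φ a) r = dist r (φ a) := dist_comm _ _
    linarith
  have hr3 : gromovProd r (φ p) (φ b) ≤ 2*δ := by
    have h := nearest_taut hG hS h₂ hr (geod_mem_right h₂)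
    unfold gromovProd
    have c1 : dist (φ p) r = dist r (φ p) := dist_comm _ _
    have c2 : dist (φ b) r = dist r (φ b) := dist_comm _ _
    linarith
  -- Gromov products at φ q are small
  set c₂ : ℝ := morseH δ K ε + 4*K*δ + ε with hc₂def
  have hmorseH_nonneg : 0 ≤ morseH δ K ε := by
    have h1 : 0 ≤ morseLam δ K ε := by rw [morseLam]; positivity
    have h2 : 0 ≤ morseB δ K ε := by
      rw [morseB]
      have : 0 ≤ 2*K^2*(4*(morseLam δ K ε)+ε) := by positivity
      linarith
    rw [morseH]; linarith
  -- (a) product with (φ a, φ b)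
  have hq1 : gromovProd (φ q) (φ a) (φ b) ≤ c₂ := by
    obtain ⟨f₁, hf₁, hμ₁⟩ := h₁
    have hqmem := hq.1
    rw [hμ₁] at hqmem
    obtain ⟨tq, htq, hfq⟩ := hqmem
    obtain ⟨m, hm, hdm⟩ := morse hG hS hδ hK hε hf₁ hφ h₂ tq htq
    rw [hfq] at hdm
    calc gromovProd (φ q) (φ a) (φ b) ≤ dist (φ q) m := gromovProd_le_dist_mem h₂ hm _
    _ ≤ c₂ := by rw [hc₂def]; nlinarith
  -- (b) products with (φ p, φ a) and (φ p, φ b)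
  have key : ∀ v : Y, v ∈ μ₁ → (∀ z ∈ μ₁, dist p q ≤ dist p z) → True := fun _ _ _ => trivial
  have hq2 : ∀ (v : Y), IsGeodSeg μ₁ a b → v = a ∨ v = b → v ∈ μ₁ →
      gromovProd (φ q) (φ p) (φ v) ≤ c₂ := by
    intro v _ _ hvmem
    -- q is 4δ-close to a geodesic from p to v
    have htaut := nearest_taut hG hS h₁ hq hvmem
    have hprod : gromovProd q p v ≤ 2*δ := by
      unfold gromovProd
      have c1 : dist p q = dist q p := dist_comm _ _
      have c2 : dist v q = dist q v := dist_comm _ _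
      linarith
    obtain ⟨σ₃, hσ₃⟩ := hG p v
    obtain ⟨x₁, hx₁mem, hx₁⟩ := exists_near_gromovProd hG hS hσ₃ q
    have hx₁' : dist q x₁ ≤ 4*δ := by linarith
    have hφx₁ : dist (φ q) (φ x₁) ≤ 4*K*δ + ε := by
      have h := (hφ q x₁).2
      nlinarith
    -- Morse for the geodesic from p to v
    obtain ⟨μ₃, hμ₃⟩ := hG (φ p) (φ v)
    obtain ⟨f₃, hf₃, hσ₃eq⟩ := hσ₃
    rw [hσ₃eq] at hx₁mem
    obtain ⟨s₁, hs₁, hfs₁⟩ := hx₁mem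
    obtain ⟨m₃, hm₃, hdm₃⟩ := morse hG hS hδ hK hε hf₃ hφ hμ₃ s₁ hs₁
    rw [hfs₁] at hdm₃
    calc gromovProd (φ q) (φ p) (φ v) ≤ dist (φ q) m₃ := gromovProd_le_dist_mem hμ₃ hm₃ _
    _ ≤ dist (φ q) (φ x₁) + dist (φ x₁) m₃ := dist_triangle _ _ _
    _ ≤ c₂ := by rw [hc₂def]; linarith
  have hq2a : gromovProd (φ q) (φ p) (φ a) ≤ c₂ :=
    hq2 a h₁ (Or.inl rfl) (geod_mem_left h₁)
  have hq2b : gromovProd (φ q) (φ p) (φ b) ≤ c₂ :=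
    hq2 b h₁ (Or.inr rfl) (geod_mem_right h₁)
  -- conclude via the coarse-center lemma
  have hfinal := center_close hG hS hδ (w := φ p) (a' := φ a) (b' := φ b)
    (z₁ := r) (z₂ := φ q) (c₁ := 2*δ) (c₂ := c₂) hr1 hr2 hr3 hq1 hq2a hq2b
  calc dist r (φ q) ≤ 2*δ + c₂ + 6*δ := hfinal
  _ = (morseH δ K ε + 4*K*δ + ε) + 2*δ + 6*δ := by rw [hc₂def]; ring
end

section
/- With notation as in the construction of B_λ in a tree (T) of hyperbolic metric spaces satisfying the qi-embedded condition: there exists A > 0, depending only on the structural constants, such that for every point a ∈ P^{-1}(v) ∩ B_λ with v in the support tree T₁, there exists b ∈ i_{v₀}(λ) with d(a,b) ≤ A · d_T(P(a), P(b)). -/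
open Metric Set Filter

/-- The structural hypotheses of a tree (`T`, realized by a simplicial tree `Gr`) of
hyperbolic metric spaces satisfying the quasi-isometrically embedded condition:
vertex spaces `Xv v` (δ-hyperbolic geodesic, uniformly properly and 1-Lipschitzly
included in `X` as the fibers of `P`), edge-space images `Ed v w h ⊆ Xv v`
(`C₂`-quasiconvex), and edge identifications `φ` which are `(K,ε)`-quasi-isometric
embeddings moving points distance at most 1 in `X`. -/
def TreeOfSpaces (δ K ε C₂ : ℝ)
    (T : Type) (Gr : SimpleGraph T)
    (X : Type) [MetricSpace X] (P : X → T)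
    (Xv : T → Type) [∀ v, MetricSpace (Xv v)]
    (iv : ∀ v, Xv v → X)
    (Ed : ∀ v w, Gr.Adj v w → Set (Xv v))
    (φ : ∀ v w, Gr.Adj v w → Xv v → Xv w) : Prop :=
  Gr.IsTree ∧
  GeodesicSpace X ∧
  (∀ x y : X, (Gr.dist (P x) (P y) : ℝ) ≤ dist x y) ∧
  (∀ v, Set.range (iv v) = P ⁻¹' {v}) ∧
  (∀ v, Function.Injective (iv v)) ∧
  (∀ v (x y : Xv v), dist (iv v x) (iv v y) ≤ dist x y) ∧
  (∀ M : ℝ, ∃ N : ℝ, ∀ v (x y : Xv v), dist (iv v x) (iv v y) ≤ M → dist x y ≤ N) ∧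
  (∀ v, GeodesicSpace (Xv v)) ∧
  (∀ v, SlimTriangles (Xv v) δ) ∧
  (∀ v w (h : Gr.Adj v w), ∀ a ∈ Ed v w h, ∀ b ∈ Ed v w h,
    ∀ σ : Set (Xv v), IsGeodSeg σ a b → ∀ p ∈ σ, Metric.infDist p (Ed v w h) ≤ C₂) ∧
  (∀ v w (h : Gr.Adj v w), ∀ a ∈ Ed v w h, ∀ b ∈ Ed v w h,
    dist a b / K - ε ≤ dist (φ v w h a) (φ v w h b) ∧
      dist (φ v w h a) (φ v w h b) ≤ K * dist a b + ε) ∧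
  (∀ v w (h : Gr.Adj v w), ∀ a ∈ Ed v w h, φ v w h a ∈ Ed w v h.symm ∧
    φ w v h.symm (φ v w h a) = a ∧ dist (iv v a) (iv w (φ v w h a)) ≤ 1)

/-- Mitra's ladder `B_λ`: the support tree `T₁`, the geodesics `λ_v = lamv v` in the
vertex spaces obtained by propagating the base geodesic `lam ⊆ Xv v₀` across edge
spaces (pushing across an edge only when the projection of a `C`-neighborhood of the
current geodesic to the edge-space image has diameter at least `D`), and
`B = ⋃_{v ∈ T₁} i_v(λ_v)`. -/
def MitraLadder (C D : ℝ)
    (T : Type) (Gr : SimpleGraph T)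
    (X : Type) [MetricSpace X] (P : X → T)
    (Xv : T → Type) [∀ v, MetricSpace (Xv v)]
    (iv : ∀ v, Xv v → X)
    (Ed : ∀ v w, Gr.Adj v w → Set (Xv v))
    (φ : ∀ v w, Gr.Adj v w → Xv v → Xv w)
    (v₀ : T) (lam : Set (Xv v₀)) (a₀ b₀ : Xv v₀)
    (T₁ : Set T) (lamv : ∀ v, Set (Xv v)) (B : Set X) : Prop :=
  IsGeodSeg lam a₀ b₀ ∧ lamv v₀ = lam ∧ v₀ ∈ T₁ ∧
  T₁ = {v : T | ∃ x ∈ B, P x = v} ∧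
  B = ⋃ v ∈ T₁, iv v '' lamv v ∧
  (∀ v ∈ T₁, ∃ a b : Xv v, IsGeodSeg (lamv v) a b) ∧
  -- each non-base vertex of the support tree is obtained from its parent `w` by
  -- pushing a geodesic across the corresponding edge space
  (∀ v ∈ T₁, v ≠ v₀ → ∃ (w : T) (h : Gr.Adj w v), w ∈ T₁ ∧
    Gr.dist v₀ w + 1 = Gr.dist v₀ v ∧
    ∃ p ∈ Ed w v h, ∃ q ∈ Ed w v h,
      Metric.infDist p (lamv w) ≤ C ∧ Metric.infDist q (lamv w) ≤ C ∧
      D ≤ dist p q ∧ IsGeodSeg (lamv v) (φ w v h p) (φ w v h q))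

section Helpers
variable {Y : Type*} [MetricSpace Y]

lemma geodSeg_left_mem {σ : Set Y} {a b : Y} (h : IsGeodSeg σ a b) : a ∈ σ := by
  obtain ⟨f, ⟨h0, hL, _⟩, rfl⟩ := h
  exact ⟨0, ⟨le_refl _, dist_nonneg⟩, h0⟩

lemma geodSeg_right_mem {σ : Set Y} {a b : Y} (h : IsGeodSeg σ a b) : b ∈ σ := by
  obtain ⟨f, ⟨h0, hL, _⟩, rfl⟩ := h
  exact ⟨dist a b, ⟨dist_nonneg, le_refl _⟩, hL⟩

lemma geodSeg_nonempty {σ : Set Y} {a b : Y} (h : IsGeodSeg σ a b) : σ.Nonempty :=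
  ⟨a, geodSeg_left_mem h⟩

lemma geodSeg_dist_left {σ : Set Y} {a b : Y} (h : IsGeodSeg σ a b) {z : Y} (hz : z ∈ σ) :
    dist z a ≤ dist a b := by
  obtain ⟨f, ⟨h0, hL, hf⟩, rfl⟩ := h
  obtain ⟨t, ht, rfl⟩ := hz
  have := hf t ht 0 ⟨le_refl _, dist_nonneg⟩
  rw [h0] at this
  rw [this]
  rw [abs_of_nonneg (by linarith [ht.1])]
  linarith [ht.2]

lemma geodSeg_dist_right {σ : Set Y} {a b : Y} (h : IsGeodSeg σ a b) {z : Y} (hz : z ∈ σ) :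
    dist z b ≤ dist a b := by
  obtain ⟨f, ⟨h0, hL, hf⟩, rfl⟩ := h
  obtain ⟨t, ht, rfl⟩ := hz
  have := hf t ht (dist a b) ⟨dist_nonneg, le_refl _⟩
  rw [hL] at this
  rw [this, abs_of_nonpos (by linarith [ht.2])]
  linarith [ht.1]

lemma geodSeg_symm {σ : Set Y} {a b : Y} (h : IsGeodSeg σ a b) : IsGeodSeg σ b a := by
  obtain ⟨f, ⟨h0, hL, hf⟩, rfl⟩ := h
  set L := dist a b with hLdef
  have hL' : dist b a = L := dist_comm b a
  refine ⟨fun t => f (L - t), ⟨by simp [hL', hL], by simp [hL', h0], ?_⟩, ?_⟩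
  · intro s hs t ht
    rw [hL'] at hs ht
    have := hf (L - s) ⟨by linarith [hs.2], by linarith [hs.1]⟩
      (L - t) ⟨by linarith [ht.2], by linarith [ht.1]⟩
    rw [this]
    rw [abs_sub_comm]
    ring_nf
  · rw [hL']
    ext z
    constructor
    · rintro ⟨t, ht, rfl⟩
      exact ⟨L - t, ⟨by linarith [ht.2], by linarith [ht.1]⟩, by ring_nf⟩
    · rintro ⟨t, ht, rfl⟩
      exact ⟨L - t, ⟨by linarith [ht.2], by linarith [ht.1]⟩, by ring_nf⟩

lemma geodParam_sub {f : ℝ → Y} {a b : Y} (h : IsGeodParam f a b) {s t : ℝ}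
    (hs : 0 ≤ s) (hst : s ≤ t) (ht : t ≤ dist a b) :
    IsGeodSeg (f '' Set.Icc s t) (f s) (f t) := by
  obtain ⟨h0, hL, hf⟩ := h
  have hd : dist (f s) (f t) = t - s := by
    rw [hf s ⟨hs, le_trans hst ht⟩ t ⟨le_trans hs hst, ht⟩, abs_of_nonpos (by linarith)]
    ring
  refine ⟨fun u => f (s + u), ⟨by simp, by rw [hd]; ring_nf, ?_⟩, ?_⟩
  · intro u hu u' hu'
    rw [hd] at hu hu'
    rw [hf (s + u) ⟨by linarith [hu.1], by linarith [hu.2]⟩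
       (s + u') ⟨by linarith [hu'.1], by linarith [hu'.2]⟩]
    ring_nf
  · rw [hd]
    ext z
    constructor
    · rintro ⟨u, hu, rfl⟩
      exact ⟨u - s, ⟨by linarith [hu.1], by linarith [hu.2]⟩, by ring_nf⟩
    · rintro ⟨u, hu, rfl⟩
      exact ⟨s + u, ⟨by linarith [hu.1], by linarith [hu.2]⟩, rfl⟩

/-- two points of a geodesic segment are joined by a geodesic inside it -/
lemma geodSeg_sub_mem {σ : Set Y} {a b : Y} (h : IsGeodSeg σ a b) {p q : Y}
    (hp : p ∈ σ) (hq : q ∈ σ) : ∃ τ ⊆ σ, IsGeodSeg τ p q := by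
  obtain ⟨f, hf, rfl⟩ := h
  obtain ⟨s, hs, rfl⟩ := hp
  obtain ⟨t, ht, rfl⟩ := hq
  rcases le_total s t with hst | hst
  · exact ⟨f '' Set.Icc s t, Set.image_mono (Set.Icc_subset_Icc hs.1 ht.2),
      geodParam_sub hf hs.1 hst ht.2⟩
  · refine ⟨f '' Set.Icc t s, Set.image_mono (Set.Icc_subset_Icc ht.1 hs.2),
      geodSeg_symm (geodParam_sub hf ht.1 hst hs.2)⟩

lemma geodSeg_isCompact {σ : Set Y} {a b : Y} (h : IsGeodSeg σ a b) : IsCompact σ := by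
  obtain ⟨f, ⟨h0, hL, hf⟩, rfl⟩ := h
  apply IsCompact.image_of_continuousOn isCompact_Icc
  have hlip : LipschitzOnWith 1 f (Set.Icc 0 (dist a b)) := by
    rw [lipschitzOnWith_iff_dist_le_mul]
    intro x hx y hy
    rw [hf x hx y hy, Real.dist_eq]
    simp
  exact hlip.continuousOn

end Helpers

section Chain
variable {Y : Type*} [MetricSpace Y]

/-- log-sized bound on distance from a point of a geodesic to a chain joining its endpoints -/
lemma chain_lemma {δ c : ℝ} (hδ : 0 ≤ δ) (hc : 0 ≤ c)
    (hG : GeodesicSpace Y) (hS : SlimTriangles Y δ) :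
    ∀ (m n : ℕ) (x : ℕ → Y), n ≤ 2 ^ m → (∀ i < n, dist (x i) (x (i + 1)) ≤ c) →
      ∀ σ : Set Y, IsGeodSeg σ (x 0) (x n) → ∀ z ∈ σ,
        ∃ i ≤ n, dist z (x i) ≤ δ * m + c := by
  intro m
  induction m with
  | zero =>
    intro n x hn hstep σ hσ z hz
    interval_cases n
    · refine ⟨0, le_refl _, ?_⟩
      have h1 := geodSeg_dist_left hσ hz
      simp only [dist_self] at h1
      have : dist z (x 0) ≤ 0 := h1
      simp only [Nat.cast_zero]
      linarith
    · refine ⟨0, by norm_num, ?_⟩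
      have h1 := geodSeg_dist_left hσ hz
      have h2 := hstep 0 (by norm_num)
      simp only [Nat.cast_zero]
      linarith
  | succ m IH =>
    intro n x hn hstep σ hσ z hz
    by_cases hn' : n ≤ 2 ^ m
    · obtain ⟨i, hi, hd⟩ := IH n x hn' hstep σ hσ z hz
      refine ⟨i, hi, le_trans hd ?_⟩
      push_cast
      nlinarith
    push_neg at hn'
    have hn1 : 1 ≤ n := le_trans (Nat.one_le_two_pow) hn'.le
    set k := (n + 1) / 2 with hk
    have h2m : (2:ℕ) ^ (m + 1) = 2 * 2 ^ m := by ring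
    have hk1 : k ≤ 2 ^ m := by omega
    have hk2 : n - k ≤ 2 ^ m := by omega
    have hkn : k ≤ n := by omega
    obtain ⟨σ₁, hσ₁⟩ := hG (x 0) (x k)
    obtain ⟨σ₂, hσ₂⟩ := hG (x k) (x n)
    obtain ⟨y, hy, hdy⟩ := hS (x 0) (x k) (x n) σ₁ σ₂ σ hσ₁ hσ₂ hσ z hz
    rcases hy with hy | hy
    · obtain ⟨i, hi, hd⟩ := IH k x hk1 (fun i hi => hstep i (by omega)) σ₁ hσ₁ y hy
      refine ⟨i, by omega, ?_⟩
      calc dist z (x i) ≤ dist z y + dist y (x i) := dist_triangle _ _ _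
        _ ≤ δ + (δ * m + c) := by linarith
        _ ≤ δ * ((m : ℝ) + 1) + c := by nlinarith
        _ = δ * ((m + 1 : ℕ) : ℝ) + c := by push_cast; ring
    · have hend : x (k + (n - k)) = x n := by congr 1; omega
      obtain ⟨i, hi, hd⟩ := IH (n - k) (fun j => x (k + j)) hk2
        (fun i hi => by
          have h3 := hstep (k + i) (by omega)
          show dist (x (k + i)) (x (k + (i + 1))) ≤ c
          rw [← Nat.add_assoc]
          exact h3) σ₂ (by simpa [Nat.add_sub_cancel' hkn] using hσ₂) y hy
      refine ⟨k + i, by omega, ?_⟩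
      calc dist z (x (k + i)) ≤ dist z y + dist y (x (k + i)) := dist_triangle _ _ _
        _ ≤ δ + (δ * m + c) := by linarith
        _ ≤ δ * ((m : ℝ) + 1) + c := by nlinarith
        _ = δ * ((m + 1 : ℕ) : ℝ) + c := by push_cast; ring

end Chain

/-- a quadratic-vs-linear bound: if `2^(M-1) ≤ α M + β` then `M` is bounded. -/
lemma pow_linear_bound {α β : ℝ} (hα : 0 ≤ α) (hβ : 0 ≤ β) {M : ℕ} (hM : 1 ≤ M)
    (h : (2:ℝ) ^ (M - 1) ≤ α * M + β) : (M:ℝ) ≤ 8 * α + 8 * β + 3 := by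
  have h1 : (M / 2 : ℕ) < 2 ^ (M / 2 : ℕ) := Nat.lt_two_pow_self
  have h2 : (2:ℝ) ^ (M / 2 : ℕ) * (2:ℝ) ^ (M / 2 : ℕ) ≤ (2:ℝ) ^ M := by
    rw [← pow_add]
    apply pow_le_pow_right₀ (by norm_num)
    omega
  have h3 : (2:ℝ) ^ M = 2 * (2:ℝ) ^ (M - 1) := by
    rw [← pow_succ']
    congr 1
    omega
  have h4 : ((M / 2 : ℕ) : ℝ) + 1 ≤ (2:ℝ) ^ (M / 2 : ℕ) := by
    have : (M / 2 : ℕ) + 1 ≤ 2 ^ (M / 2 : ℕ) := h1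
    exact_mod_cast this
  have h5 : ((M:ℝ) + 1) / 2 ≤ ((M / 2 : ℕ) : ℝ) + 1 := by
    have : (M:ℝ) - 1 ≤ 2 * ((M / 2 : ℕ) : ℝ) := by exact_mod_cast by omega
    linarith
  have h6 : ((M:ℝ) + 1) / 2 * (((M:ℝ) + 1) / 2) ≤ 2 * (α * M + β) := by
    calc ((M:ℝ) + 1) / 2 * (((M:ℝ) + 1) / 2)
        ≤ ((2:ℝ) ^ (M / 2 : ℕ)) * ((2:ℝ) ^ (M / 2 : ℕ)) := by
          have hh : ((M:ℝ) + 1) / 2 ≤ (2:ℝ) ^ (M / 2 : ℕ) := le_trans h5 h4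
          have hpos : (0:ℝ) ≤ ((M:ℝ) + 1) / 2 := by positivity
          exact mul_le_mul hh hh hpos (by positivity)
        _ ≤ (2:ℝ) ^ M := h2
        _ = 2 * (2:ℝ) ^ (M - 1) := h3
        _ ≤ 2 * (α * M + β) := by linarith
  have hM1 : (1:ℝ) ≤ M := by exact_mod_cast hM
  nlinarith

/-- Explicit Morse stability constant. -/
noncomputable def morseBound (δ K ε : ℝ) : ℝ :=
  2*δ + δ*(8*(6*K*δ) + 8*(12*K*δ + 6*K*(K+ε) + K*ε) + 3) + (K+ε) + 2

lemma morseBound_pos {δ K ε : ℝ} (hδ : 0 ≤ δ) (hK : 1 ≤ K) (hε : 0 ≤ ε) :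
    0 < morseBound δ K ε := by
  unfold morseBound
  have h1 : (0:ℝ) ≤ δ*(8*(6*K*δ) + 8*(12*K*δ + 6*K*(K+ε) + K*ε) + 3) :=
    mul_nonneg hδ (by nlinarith)
  linarith

section Morse
variable {Y : Type*} [MetricSpace Y]

/-- Morse lemma, the direction we need: every point of a geodesic joining the endpoints of a
discrete quasigeodesic lies at uniformly bounded distance from the quasigeodesic. -/
lemma morse_s12 {δ K ε : ℝ} (hδ : 0 ≤ δ) (hK : 1 ≤ K) (hε : 0 ≤ ε)
    (hG : GeodesicSpace Y) (hS : SlimTriangles Y δ) (n : ℕ) (x : ℕ → Y)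
    (hup : ∀ i ≤ n, ∀ j ≤ n, dist (x i) (x j) ≤ K * |(i:ℝ) - (j:ℝ)| + ε)
    (hlo : ∀ i ≤ n, ∀ j ≤ n, |(i:ℝ) - (j:ℝ)| / K - ε ≤ dist (x i) (x j))
    {σ : Set Y} (hσ : IsGeodSeg σ (x 0) (x n)) :
    ∀ z ∈ σ, ∃ i ≤ n, dist z (x i) ≤ morseBound δ K ε := by
  have hK0 : 0 < K := lt_of_lt_of_le one_pos hK
  set S : Set Y := x '' Set.Iic n with hSdef
  have hSne : S.Nonempty := ⟨x 0, ⟨0, Nat.zero_le n, rfl⟩⟩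
  have hSfin : S.Finite := (Set.finite_Iic n).image x
  have hScomp : IsCompact S := hSfin.isCompact
  have hcomp : IsCompact σ := geodSeg_isCompact hσ
  have hne : σ.Nonempty := geodSeg_nonempty hσ
  obtain ⟨z₀, hz₀σ, hz₀max⟩ := hcomp.exists_isMaxOn hne
    ((continuous_infDist_pt S).continuousOn)
  have hmax : ∀ w ∈ σ, infDist w S ≤ infDist z₀ S := fun w hw => hz₀max hw
  set R := infDist z₀ S with hRdef
  have hR0 : 0 ≤ R := infDist_nonneg
  have hRle : ∀ i ≤ n, R ≤ dist z₀ (x i) := by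
    intro i hi
    exact infDist_le_dist_of_mem ⟨i, hi, rfl⟩
  -- main claim: R is bounded
  set MB0 : ℝ := 2*δ + δ*(8*(6*K*δ) + 8*(12*K*δ + 6*K*(K+ε) + K*ε) + 3) + (K+ε) with hMB0
  have hMB0δ : 2*δ + (K+ε) ≤ MB0 := by
    rw [hMB0]
    have h1 : (0:ℝ) ≤ δ*(8*(6*K*δ) + 8*(12*K*δ + 6*K*(K+ε) + K*ε) + 3) :=
      mul_nonneg hδ (by nlinarith)
    linarith
  have claim : R ≤ MB0 := by
    obtain ⟨f, hf, hσeq⟩ := hσ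
    set L := dist (x 0) (x n) with hL
    obtain ⟨t₀, ht₀, hz₀t⟩ := by rw [hσeq] at hz₀σ; exact hz₀σ
    set u₁ := max 0 (t₀ - 2*R) with hu₁
    set u₂ := min L (t₀ + 2*R) with hu₂
    have hu₁0 : 0 ≤ u₁ := le_max_left _ _
    have hu₁t : u₁ ≤ t₀ := max_le ht₀.1 (by linarith)
    have htu₂ : t₀ ≤ u₂ := le_min ht₀.2 (by linarith)
    have hu₂L : u₂ ≤ L := min_le_left _ _
    set y := f u₁ with hy
    set z := f u₂ with hz
    have hyσ : y ∈ σ := by rw [hσeq]; exact ⟨u₁, ⟨hu₁0, le_trans hu₁t ht₀.2⟩, rfl⟩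
    have hzσ : z ∈ σ := by rw [hσeq]; exact ⟨u₂, ⟨le_trans hu₁0 (le_trans hu₁t htu₂), hu₂L⟩, rfl⟩
    have hyIcc : u₁ ∈ Set.Icc (0:ℝ) L := ⟨hu₁0, le_trans hu₁t ht₀.2⟩
    have hzIcc : u₂ ∈ Set.Icc (0:ℝ) L := ⟨le_trans hu₁0 (le_trans hu₁t htu₂), hu₂L⟩
    have hdyz₀ : dist y z₀ = t₀ - u₁ := by
      rw [← hz₀t, hf.2.2 u₁ hyIcc t₀ ht₀, abs_of_nonpos (by linarith)]; ring
    have hdzz₀ : dist z z₀ = u₂ - t₀ := by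
      rw [← hz₀t, hf.2.2 u₂ hzIcc t₀ ht₀, abs_of_nonneg (by linarith)]
    have hdyz : dist y z = u₂ - u₁ := by
      rw [hf.2.2 u₁ hyIcc u₂ hzIcc, abs_of_nonpos (by linarith)]; ring
    have hdyz4 : dist y z ≤ 4*R := by
      rw [hdyz]
      have : u₂ ≤ t₀ + 2*R := min_le_right _ _
      have : t₀ - 2*R ≤ u₁ := le_max_right _ _
      linarith [min_le_right L (t₀ + 2*R)]
    -- nearest chain points to y and z
    obtain ⟨y', hy'S, hy'd⟩ := hScomp.exists_infDist_eq_dist hSne y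
    obtain ⟨i₁, hi₁n', hi₁⟩ := hy'S
    obtain ⟨z', hz'S, hz'd⟩ := hScomp.exists_infDist_eq_dist hSne z
    obtain ⟨i₂, hi₂n', hi₂⟩ := hz'S
    have hi₁n : i₁ ≤ n := hi₁n'
    have hi₂n : i₂ ≤ n := hi₂n'
    have hdyi₁ : dist y (x i₁) ≤ R := by
      rw [hi₁, ← hy'd]; exact hmax y hyσ
    have hdzi₂ : dist z (x i₂) ≤ R := by
      rw [hi₂, ← hz'd]; exact hmax z hzσ
    -- all points of [y, x i₁] and [x i₂, z] are R-far from z₀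
    obtain ⟨σ₁, hσ₁⟩ := hG y (x i₁)
    obtain ⟨σ₂, hσ₂⟩ := hG (x i₁) z
    obtain ⟨σ₃, hσ₃⟩ := hG (x i₁) (x i₂)
    obtain ⟨σ₄, hσ₄⟩ := hG (x i₂) z
    have hfar₁ : ∀ w ∈ σ₁, R ≤ dist z₀ w := by
      intro w hw
      have hwy : dist w y ≤ dist y (x i₁) := geodSeg_dist_left hσ₁ hw
      rcases le_or_gt (2*R) t₀ with hcase | hcase
      · have : u₁ = t₀ - 2*R := max_eq_right (by linarith)
        have h2R : dist y z₀ = 2*R := by rw [hdyz₀, this]; ring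
        have := dist_triangle z₀ w y
        have := dist_triangle z₀ y w
        calc R = 2*R - R := by ring
          _ ≤ dist y z₀ - dist w y := by linarith
          _ ≤ dist z₀ w := by
              have := dist_triangle z₀ w y
              rw [dist_comm y z₀] at *
              linarith [dist_comm w y ▸ this]
      · have hu₁0' : u₁ = 0 := max_eq_left (by linarith)
        have hyx0 : y = x 0 := by rw [hy, hu₁0', hf.1]
        have h0 : dist y (x i₁) ≤ 0 := by
          rw [hi₁, ← hy'd]
          calc infDist y S ≤ dist y (x 0) := infDist_le_dist_of_mem ⟨0, Nat.zero_le n, rfl⟩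
            _ = 0 := by rw [hyx0, dist_self]
        have hw0 : dist w y ≤ 0 := le_trans hwy h0
        have hwy' : w = y := by
          have := dist_nonneg (x := w) (y := y)
          have : dist w y = 0 := le_antisymm hw0 this
          exact dist_eq_zero.mp this
        rw [hwy', hyx0]
        exact hRle 0 (Nat.zero_le n)
    have hfar₄ : ∀ w ∈ σ₄, R ≤ dist z₀ w := by
      intro w hw
      have hwz : dist w z ≤ dist (x i₂) z := geodSeg_dist_right hσ₄ hw
      rcases le_or_gt (t₀ + 2*R) L with hcase | hcase
      · have : u₂ = t₀ + 2*R := min_eq_right (by linarith)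
        have h2R : dist z z₀ = 2*R := by rw [hdzz₀, this]; ring
        calc R = 2*R - R := by ring
          _ ≤ dist z z₀ - dist w z := by rw [dist_comm (x i₂) z] at hwz; linarith
          _ ≤ dist z₀ w := by
              have h' := dist_triangle z₀ w z
              rw [dist_comm z z₀] at h2R ⊢
              linarith [dist_comm w z ▸ h']
      · have hu₂L' : u₂ = L := min_eq_left (by linarith)
        have hzxn : z = x n := by rw [hz, hu₂L', hL, hf.2.1]
        have h0 : dist z (x i₂) ≤ 0 := by
          rw [hi₂, ← hz'd]
          calc infDist z S ≤ dist z (x n) := infDist_le_dist_of_mem ⟨n, Set.mem_Iic.mpr (le_refl n), rfl⟩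
            _ = 0 := by rw [hzxn, dist_self]
        have hw0 : dist w z ≤ 0 := le_trans hwz (by rw [dist_comm]; exact h0)
        have hwz' : w = z := by
          have h1 := dist_nonneg (x := w) (y := z)
          exact dist_eq_zero.mp (le_antisymm hw0 h1)
        rw [hwz', hzxn]
        exact hRle n (le_refl _)
    -- geodesic from y to z through z₀
    have hσ' : IsGeodSeg (f '' Set.Icc u₁ u₂) y z :=
      geodParam_sub hf hu₁0 (le_trans hu₁t htu₂) hu₂L
    have hz₀mem : z₀ ∈ f '' Set.Icc u₁ u₂ := ⟨t₀, ⟨hu₁t, htu₂⟩, hz₀t⟩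
    -- first slim triangle
    obtain ⟨w₁, hw₁, hdw₁⟩ := hS y (x i₁) z σ₁ σ₂ _ hσ₁ hσ₂ hσ' z₀ hz₀mem
    rcases hw₁ with hw₁ | hw₁
    · have h1 := hfar₁ w₁ hw₁
      have h2 : R ≤ δ := le_trans h1 hdw₁
      linarith
    -- second slim triangle
    obtain ⟨w₂, hw₂, hdw₂⟩ := hS (x i₁) (x i₂) z σ₃ σ₄ σ₂ hσ₃ hσ₄ hσ₂ w₁ hw₁
    rcases hw₂ with hw₂ | hw₂
    case inr =>
      have h1 := hfar₄ w₂ hw₂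
      have h2 := dist_triangle z₀ w₁ w₂
      have h3 : R ≤ 2*δ := by linarith
      linarith
    -- middle chain
    have hstepmid : ∀ i j, i ≤ n → j ≤ n → i + 1 = j ∨ j + 1 = i → dist (x i) (x j) ≤ K + ε := by
      intro i j hi hj hij
      have := hup i hi j hj
      have habs : |(i:ℝ) - (j:ℝ)| = 1 := by
        rcases hij with h | h <;> subst h <;> push_cast <;> simp [abs_sub_comm]
      rw [habs] at this
      linarith
    have hKε0 : (0:ℝ) ≤ K + ε := by linarith
    -- build the chain from x i₁ to x i₂
    obtain ⟨k, mid, hmid0, hmidk, hkabs, hmidstep, hmidmem⟩ :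
        ∃ (k : ℕ) (mid : ℕ → Y), mid 0 = x i₁ ∧ mid k = x i₂ ∧
          ((k:ℝ) = |(i₁:ℝ) - (i₂:ℝ)|) ∧
          (∀ j < k, dist (mid j) (mid (j+1)) ≤ K + ε) ∧
          (∀ j ≤ k, ∃ i ≤ n, mid j = x i) := by
      rcases le_total i₁ i₂ with hI | hI
      · refine ⟨i₂ - i₁, fun j => x (i₁ + j), by simp,
          by show x (i₁ + (i₂ - i₁)) = x i₂; congr 1; omega, ?_, ?_, ?_⟩
        · rw [Nat.cast_sub hI, abs_sub_comm, abs_of_nonneg (by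
            have : (i₁:ℝ) ≤ i₂ := by exact_mod_cast hI
            linarith)]
        · intro j hj
          have h := hstepmid (i₁ + j) (i₁ + j + 1) (by omega) (by omega) (Or.inl rfl)
          show dist (x (i₁ + j)) (x (i₁ + (j + 1))) ≤ K + ε
          rw [← Nat.add_assoc]
          exact h
        · intro j hj
          exact ⟨i₁ + j, by omega, rfl⟩
      · refine ⟨i₁ - i₂, fun j => x (i₁ - j), by simp,
          by show x (i₁ - (i₁ - i₂)) = x i₂; congr 1; omega, ?_, ?_, ?_⟩
        · rw [Nat.cast_sub hI, abs_of_nonneg (by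
            have : (i₂:ℝ) ≤ i₁ := by exact_mod_cast hI
            linarith)]
        · intro j hj
          have h := hstepmid (i₁ - j) (i₁ - (j + 1)) (by omega) (by omega) (Or.inr (by omega))
          exact h
        · intro j hj
          exact ⟨i₁ - j, by omega, rfl⟩
    have hσ₃' : IsGeodSeg σ₃ (mid 0) (mid k) := by rw [hmid0, hmidk]; exact hσ₃
    obtain ⟨j, hjk, hdj⟩ := chain_lemma hδ hKε0 hG hS (Nat.clog 2 k) k mid
      (Nat.le_pow_clog (by norm_num) k) hmidstep σ₃ hσ₃' w₂ hw₂
    obtain ⟨i, hin, hmidj⟩ := hmidmem j hjk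
    set M := Nat.clog 2 k with hMdef
    have hRM : R ≤ 2*δ + δ*M + (K+ε) := by
      have h1 := hRle i hin
      rw [← hmidj] at h1
      have h2 := dist_triangle z₀ w₁ w₂
      have h3 := dist_triangle z₀ w₂ (mid j)
      have h4 := dist_triangle z₀ (mid j) (mid j)
      calc R ≤ dist z₀ (mid j) := h1
        _ ≤ dist z₀ w₂ + dist w₂ (mid j) := dist_triangle _ _ _
        _ ≤ (dist z₀ w₁ + dist w₁ w₂) + (δ * M + (K+ε)) := by linarith
        _ ≤ 2*δ + δ*M + (K+ε) := by linarith
    -- bound on k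
    have hd12 : dist (x i₁) (x i₂) ≤ 6*R := by
      have t1 := dist_triangle (x i₁) y (x i₂)
      have t2 := dist_triangle y z (x i₂)
      have e1 : dist (x i₁) y = dist y (x i₁) := dist_comm _ _
      have e2 : dist z (x i₂) = dist (x i₂) z := dist_comm _ _
      linarith [dist_comm z (x i₂)]
    have hk6R : (k:ℝ) ≤ K*(6*R) + K*ε := by
      have hlo' := hlo i₁ hi₁n i₂ hi₂n
      rw [← hkabs] at hlo'
      have h5 : (k:ℝ)/K ≤ 6*R + ε := by linarith
      calc (k:ℝ) = ((k:ℝ)/K) * K := by field_simp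
        _ ≤ (6*R + ε) * K := by
            apply mul_le_mul_of_nonneg_right h5 hK0.le
        _ = K*(6*R) + K*ε := by ring
    by_cases hk1 : k ≤ 1
    · have hM0 : M = 0 := by
        rw [hMdef]
        interval_cases k
        · simp
        · simp [Nat.clog_one_right]
      rw [hM0] at hRM
      simp only [Nat.cast_zero, mul_zero] at hRM
      linarith
    · push_neg at hk1
      have hM1 : 1 ≤ M := by
        by_contra hcon
        push_neg at hcon
        interval_cases M
        have := Nat.le_pow_clog (b := 2) (by norm_num) k
        rw [← hMdef] at this
        omega
      have b1 : (0:ℝ) ≤ 12*K*δ := mul_nonneg (mul_nonneg (by norm_num) hK0.le) hδ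
      have b2 : (0:ℝ) ≤ 6*K*(K+ε) := mul_nonneg (mul_nonneg (by norm_num) hK0.le) (by linarith)
      have b3 : (0:ℝ) ≤ K*ε := mul_nonneg hK0.le hε
      have b4 : (0:ℝ) ≤ 6*K*δ := mul_nonneg (mul_nonneg (by norm_num) hK0.le) hδ
      have hβ0 : (0:ℝ) ≤ 12*K*δ + 6*K*(K+ε) + K*ε := by linarith
      have hpow : (2:ℝ)^(M-1) ≤ (6*K*δ)*M + (12*K*δ + 6*K*(K+ε) + K*ε) := by
        have h1 : 2^(M-1) < k := by
          rw [hMdef]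
          exact Nat.pow_pred_clog_lt_self (by norm_num) (by omega)
        have h1' : ((2:ℝ))^(M-1) ≤ (k:ℝ) := by
          exact_mod_cast h1.le
        have h6 : 6*K*R ≤ 6*K*(2*δ + δ*M + (K+ε)) :=
          mul_le_mul_of_nonneg_left hRM (by linarith)
        have h8 : 6*K*(2*δ + δ*(M:ℝ) + (K+ε)) = (6*K*δ)*(M:ℝ) + 12*K*δ + 6*K*(K+ε) := by ring
        have h9 : K*(6*R) = 6*K*R := by ring
        linarith
      have hMb := pow_linear_bound (α := 6*K*δ) (β := 12*K*δ + 6*K*(K+ε) + K*ε)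
        b4 hβ0 hM1 hpow
      have h7 : δ*(M:ℝ) ≤ δ*(8*(6*K*δ) + 8*(12*K*δ + 6*K*(K+ε) + K*ε) + 3) :=
        mul_le_mul_of_nonneg_left (by linarith) hδ
      rw [hMB0]
      linarith
  -- conclude for arbitrary z
  intro z hzσ
  have h1 : infDist z S ≤ R := hmax z hzσ
  have h2 : infDist z S < MB0 + 1 := by linarith
  obtain ⟨y', hy'S, hy'd⟩ := (infDist_lt_iff hSne).mp h2
  obtain ⟨i, hin, rfl⟩ := hy'S
  exact ⟨i, hin, by rw [morseBound]; rw [hMB0] at hy'd; linarith⟩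

end Morse

section PerLevel

/-- `|min a c - min b c| ≤ |a - b|` -/
lemma abs_min_sub_min {a b c : ℝ} : |min a c - min b c| ≤ |a - b| := by
  rcases le_total a c with h1 | h1 <;> rcases le_total b c with h2 | h2
  · rw [min_eq_left h1, min_eq_left h2]
  · rw [min_eq_left h1, min_eq_right h2, abs_le]
    rcases abs_cases (a - b) with ⟨he, hs⟩ | ⟨he, hs⟩ <;> constructor <;> linarith
  · rw [min_eq_right h1, min_eq_left h2, abs_le]
    rcases abs_cases (a - b) with ⟨he, hs⟩ | ⟨he, hs⟩ <;> constructor <;> linarith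
  · rw [min_eq_right h1, min_eq_right h2]
    simp [abs_nonneg]

variable {V W XX : Type*} [MetricSpace V] [MetricSpace W] [MetricSpace XX]

/-- the key inductive step: a point on the pushed-across geodesic can be moved back,
at bounded cost in `X`, to a point of the previous geodesic. -/
lemma per_level {δ K ε C C₂ : ℝ} (hδ : 0 ≤ δ) (hK : 1 ≤ K) (hε : 0 ≤ ε)
    (hC₂ : 0 ≤ C₂) (hC : 0 ≤ C)
    (iV : V → XX) (iW : W → XX)
    (hGV : GeodesicSpace V) (hSV : SlimTriangles V δ)
    (hGW : GeodesicSpace W) (hSW : SlimTriangles W δ)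
    (E : Set W)
    (hEqc : ∀ a ∈ E, ∀ b ∈ E, ∀ σ : Set W, IsGeodSeg σ a b →
      ∀ z ∈ σ, Metric.infDist z E ≤ C₂)
    (φ : W → V)
    (hφ : ∀ a ∈ E, ∀ b ∈ E, dist a b / K - ε ≤ dist (φ a) (φ b) ∧
      dist (φ a) (φ b) ≤ K * dist a b + ε)
    (hmove : ∀ a ∈ E, dist (iW a) (iV (φ a)) ≤ 1)
    (hiV : ∀ x y : V, dist (iV x) (iV y) ≤ dist x y)
    (hiW : ∀ x y : W, dist (iW x) (iW y) ≤ dist x y)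
    (lamw : Set W) (aw bw : W) (hlamw : IsGeodSeg lamw aw bw)
    (p q : W) (hp : p ∈ E) (hq : q ∈ E)
    (hpC : Metric.infDist p lamw ≤ C) (hqC : Metric.infDist q lamw ≤ C)
    (lamV : Set V) (hlamV : IsGeodSeg lamV (φ p) (φ q))
    (x : V) (hx : x ∈ lamV) :
    ∃ y ∈ lamw, dist (iV x) (iW y) ≤
      morseBound δ K (K*(2*C₂+3)+ε) + C₂ + C + 2*δ + 3 := by
  have hK0 : 0 < K := lt_of_lt_of_le one_pos hK
  obtain ⟨σμ, hσμ⟩ := hGW p q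
  obtain ⟨μf, hμ, hσμeq⟩ := hσμ
  have hσμ' : IsGeodSeg σμ p q := ⟨μf, hμ, hσμeq⟩
  set L := dist p q with hLdef
  have hL0 : 0 ≤ L := dist_nonneg
  set n := Nat.ceil L with hndef
  have hLn : L ≤ (n:ℝ) := Nat.le_ceil L
  have hn1 : (n:ℝ) < L + 1 := by
    have := Nat.ceil_lt_add_one hL0
    exact_mod_cast this
  set s : ℕ → ℝ := fun i => min (i:ℝ) L with hsdef
  have hsIcc : ∀ i, s i ∈ Set.Icc (0:ℝ) L := fun i =>
    ⟨le_min (Nat.cast_nonneg i) hL0, min_le_right _ _⟩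
  have hslb : ∀ i ≤ n, (i:ℝ) - 1 ≤ s i := by
    intro i hi
    apply le_min
    · linarith
    · have : (i:ℝ) ≤ n := by exact_mod_cast hi
      linarith
  have hsub : ∀ i, s i ≤ (i:ℝ) := fun i => min_le_left _ _
  set μpt : ℕ → W := fun i => μf (s i) with hμptdef
  have hμmem : ∀ i, μpt i ∈ σμ := by
    intro i
    rw [hσμeq]
    exact ⟨s i, hsIcc i, rfl⟩
  have hμd : ∀ i j, dist (μpt i) (μpt j) = |s i - s j| := fun i j =>
    hμ.2.2 (s i) (hsIcc i) (s j) (hsIcc j)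
  have hEne : E.Nonempty := ⟨p, hp⟩
  have hex : ∀ i, ∃ e ∈ E, dist (μpt i) e ≤ C₂ + 1 ∧ (i = 0 → e = p) ∧ (i = n → e = q) := by
    intro i
    by_cases h0 : i = 0
    · subst h0
      have hs0 : s 0 = 0 := by simp [hsdef, hL0]
      have hμ0 : μpt 0 = p := by rw [hμptdef]; simp only [hs0]; exact hμ.1
      by_cases hn0 : (0:ℕ) = n
      · have hL0' : L = 0 := by
          have : (n:ℝ) = 0 := by exact_mod_cast hn0.symm
          linarith
        have hpq : p = q := by
          have : dist p q = 0 := by rw [← hLdef, hL0']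
          exact dist_eq_zero.mp this
        exact ⟨p, hp, by rw [hμ0]; simp; linarith, fun _ => rfl, fun _ => hpq⟩
      · exact ⟨p, hp, by rw [hμ0]; simp; linarith, fun _ => rfl, fun h => absurd h hn0⟩
    · by_cases hnn : i = n
      · subst hnn
        have hsn : s n = L := min_eq_right hLn
        have hμn : μpt n = q := by rw [hμptdef]; simp only [hsn]; exact hμ.2.1
        exact ⟨q, hq, by rw [hμn]; simp; linarith, fun h => absurd h h0, fun _ => rfl⟩
      · have h1 : Metric.infDist (μpt i) E ≤ C₂ := hEqc p hp q hq σμ hσμ' (μpt i) (hμmem i)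
        have h2 : Metric.infDist (μpt i) E < C₂ + 1 := by linarith
        obtain ⟨e, heE, hed⟩ := (Metric.infDist_lt_iff hEne).mp h2
        exact ⟨e, heE, hed.le, fun h => absurd h h0, fun h => absurd h hnn⟩
  choose e heE hed he0 hen using hex
  set g : ℕ → V := fun i => φ (e i) with hgdef
  have hεg : (0:ℝ) ≤ K*(2*C₂+3)+ε := by nlinarith
  -- quasigeodesic estimates for g
  have habs_ub : ∀ i j : ℕ, |s i - s j| ≤ |(i:ℝ) - (j:ℝ)| := fun i j => abs_min_sub_min
  have habs_lb : ∀ i ≤ n, ∀ j ≤ n, |(i:ℝ) - (j:ℝ)| - 1 ≤ |s i - s j| := by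
    intro i hi j hj
    have h1 := hslb i hi
    have h2 := hslb j hj
    have h3 := hsub i
    have h4 := hsub j
    have h5 : |((i:ℝ) - j) - (s i - s j)| ≤ 1 := by
      rw [abs_le]; constructor <;> linarith
    have h6 := abs_sub_abs_le_abs_sub ((i:ℝ) - j) (s i - s j)
    linarith
  have hde_ub : ∀ i j : ℕ, dist (e i) (e j) ≤ |(i:ℝ) - (j:ℝ)| + (2*C₂+2) := by
    intro i j
    have t1 := dist_triangle (e i) (μpt i) (e j)
    have t2 := dist_triangle (μpt i) (μpt j) (e j)
    have := hμd i j
    have h1 := hed i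
    have h2 := hed j
    have h3 := habs_ub i j
    rw [dist_comm (e i) (μpt i)] at t1
    linarith
  have hde_lb : ∀ i ≤ n, ∀ j ≤ n, |(i:ℝ) - (j:ℝ)| - (2*C₂+3) ≤ dist (e i) (e j) := by
    intro i hi j hj
    have t1 := dist_triangle (μpt i) (e i) (μpt j)
    have t2 := dist_triangle (e i) (e j) (μpt j)
    have := hμd i j
    have h1 := hed i
    have h2 := hed j
    have h3 := habs_lb i hi j hj
    rw [dist_comm (e j) (μpt j)] at t2
    linarith
  have hg_up : ∀ i ≤ n, ∀ j ≤ n, dist (g i) (g j) ≤ K * |(i:ℝ) - (j:ℝ)| + (K*(2*C₂+3)+ε) := by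
    intro i hi j hj
    have h1 := (hφ (e i) (heE i) (e j) (heE j)).2
    have h2 := hde_ub i j
    have h3 : K * dist (e i) (e j) ≤ K * (|(i:ℝ) - (j:ℝ)| + (2*C₂+2)) :=
      mul_le_mul_of_nonneg_left h2 hK0.le
    have h4 : K * (|(i:ℝ) - (j:ℝ)| + (2*C₂+2)) = K * |(i:ℝ) - (j:ℝ)| + K*(2*C₂+2) := by ring
    have h5 : K*(2*C₂+2) ≤ K*(2*C₂+3) := by nlinarith
    calc dist (g i) (g j) ≤ K * dist (e i) (e j) + ε := h1
      _ ≤ K * |(i:ℝ) - (j:ℝ)| + K*(2*C₂+2) + ε := by linarith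
      _ ≤ K * |(i:ℝ) - (j:ℝ)| + (K*(2*C₂+3)+ε) := by linarith
  have hg_lo : ∀ i ≤ n, ∀ j ≤ n, |(i:ℝ) - (j:ℝ)| / K - (K*(2*C₂+3)+ε) ≤ dist (g i) (g j) := by
    intro i hi j hj
    have h1 := (hφ (e i) (heE i) (e j) (heE j)).1
    have h2 := hde_lb i hi j hj
    have h3 : (|(i:ℝ) - (j:ℝ)| - (2*C₂+3)) / K ≤ dist (e i) (e j) / K :=
      by apply div_le_div_of_nonneg_right h2 hK0.le
    have h4 : (|(i:ℝ) - (j:ℝ)| - (2*C₂+3)) / K = |(i:ℝ) - (j:ℝ)| / K - (2*C₂+3)/K := by ring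
    have h5 : (2*C₂+3)/K ≤ 2*C₂+3 := by
      apply div_le_self (by linarith) hK
    have h6 : (2*C₂+3 : ℝ) ≤ K*(2*C₂+3) := le_mul_of_one_le_left (by linarith) hK
    linarith
  -- apply the Morse lemma
  have hg0 : g 0 = φ p := by rw [hgdef]; simp only []; rw [he0 0 rfl]
  have hgn : g n = φ q := by rw [hgdef]; simp only []; rw [hen n rfl]
  have hlamV' : IsGeodSeg lamV (g 0) (g n) := by rw [hg0, hgn]; exact hlamV
  obtain ⟨i, hin, hdx⟩ := morse_s12 hδ hK hεg hGV hSV n g hg_up hg_lo hlamV' x hx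
  -- find a point of lamw close to μpt i
  have hlamwne : lamw.Nonempty := geodSeg_nonempty hlamw
  obtain ⟨p₁, hp₁, hdp₁⟩ := (Metric.infDist_lt_iff hlamwne).mp
    (lt_of_le_of_lt hpC (by linarith : C < C + 1))
  obtain ⟨q₁, hq₁, hdq₁⟩ := (Metric.infDist_lt_iff hlamwne).mp
    (lt_of_le_of_lt hqC (by linarith : C < C + 1))
  obtain ⟨sub, hsubss, hsubgeod⟩ := geodSeg_sub_mem hlamw hp₁ hq₁
  obtain ⟨ν, hν⟩ := hGW p q₁
  obtain ⟨τ, hτ⟩ := hGW q₁ q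
  obtain ⟨ρ, hρ⟩ := hGW p p₁
  have hyy : ∃ yy ∈ lamw, dist (μpt i) yy ≤ 2*δ + C + 1 := by
    obtain ⟨y₁, hy₁, hdy₁⟩ := hSW p q₁ q ν τ σμ hν hτ hσμ' (μpt i) (hμmem i)
    rcases hy₁ with hy₁ | hy₁
    case inr =>
      -- y₁ on the short side [q₁, q]
      have h1 : dist y₁ q₁ ≤ dist q₁ q := geodSeg_dist_left hτ hy₁
      have h2 : dist q₁ q ≤ C + 1 := by rw [dist_comm]; linarith
      refine ⟨q₁, hq₁, ?_⟩
      calc dist (μpt i) q₁ ≤ dist (μpt i) y₁ + dist y₁ q₁ := dist_triangle _ _ _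
        _ ≤ 2*δ + C + 1 := by linarith
    -- y₁ on [p, q₁]
    obtain ⟨y₂, hy₂, hdy₂⟩ := hSW p p₁ q₁ ρ sub ν hρ hsubgeod hν y₁ hy₁
    rcases hy₂ with hy₂ | hy₂
    case inr =>
      exact ⟨y₂, hsubss hy₂, by
        calc dist (μpt i) y₂ ≤ dist (μpt i) y₁ + dist y₁ y₂ := dist_triangle _ _ _
          _ ≤ 2*δ + C + 1 := by linarith⟩
    · have h1 : dist y₂ p₁ ≤ dist p p₁ := geodSeg_dist_right hρ hy₂
      refine ⟨p₁, hp₁, ?_⟩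
      calc dist (μpt i) p₁ ≤ dist (μpt i) y₁ + dist y₁ y₂ + dist y₂ p₁ :=
          dist_triangle4 _ _ _ _
        _ ≤ 2*δ + C + 1 := by linarith
  obtain ⟨yy, hyymem, hyyd⟩ := hyy
  refine ⟨yy, hyymem, ?_⟩
  have hmv := hmove (e i) (heE i)
  have s1 : dist (iV x) (iV (g i)) ≤ dist x (g i) := hiV _ _
  have s2 : dist (iV (g i)) (iW (e i)) ≤ 1 := by
    rw [dist_comm]
    exact hmv
  have s3 : dist (iW (e i)) (iW yy) ≤ dist (e i) yy := hiW _ _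
  have s4 : dist (e i) yy ≤ dist (e i) (μpt i) + dist (μpt i) yy := by
    have := dist_triangle (e i) (μpt i) yy
    linarith
  have s5 : dist (e i) (μpt i) ≤ C₂ + 1 := by rw [dist_comm]; exact hed i
  calc dist (iV x) (iW yy) ≤ dist (iV x) (iV (g i)) + dist (iV (g i)) (iW (e i))
        + dist (iW (e i)) (iW yy) := dist_triangle4 _ _ _ _
    _ ≤ morseBound δ K (K*(2*C₂+3)+ε) + C₂ + C + 2*δ + 3 := by linarith

end PerLevel

/-- Every point of Mitra's ladder `B_λ` can be connected back to the base geodesic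
`i_{v₀}(λ)`, moving a uniformly bounded distance `A` per level of the tree. -/
theorem stmt12 (δ K ε C C₂ D : ℝ) (hδ : 0 ≤ δ) (hK : 1 ≤ K) (hε : 0 ≤ ε)
    (hC₂ : 0 ≤ C₂) (hC : 0 ≤ C) (hD : 0 ≤ D) :
    ∃ A : ℝ, 0 < A ∧
      ∀ (T : Type) (Gr : SimpleGraph T)
        (X : Type) (_ : MetricSpace X) (P : X → T)
        (Xv : T → Type) (_ : ∀ v, MetricSpace (Xv v))
        (iv : ∀ v, Xv v → X)
        (Ed : ∀ v w, Gr.Adj v w → Set (Xv v))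
        (φ : ∀ v w, Gr.Adj v w → Xv v → Xv w),
        TreeOfSpaces δ K ε C₂ T Gr X P Xv iv Ed φ →
        ∀ (v₀ : T) (lam : Set (Xv v₀)) (a₀ b₀ : Xv v₀)
          (T₁ : Set T) (lamv : ∀ v, Set (Xv v)) (B : Set X),
          MitraLadder C D T Gr X P Xv iv Ed φ v₀ lam a₀ b₀ T₁ lamv B →
          ∀ a ∈ B, ∃ b ∈ iv v₀ '' lam,
            dist a b ≤ A * (Gr.dist (P a) (P b) : ℝ) := by
  classical
  set A : ℝ := morseBound δ K (K*(2*C₂+3)+ε) + C₂ + C + 2*δ + 4 with hA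
  have hεg : (0:ℝ) ≤ K*(2*C₂+3)+ε := by nlinarith
  have hA0 : 0 < A := by
    have := morseBound_pos (δ := δ) (K := K) (ε := K*(2*C₂+3)+ε) hδ hK hεg
    rw [hA]; linarith
  refine ⟨A, hA0, ?_⟩
  intro T Gr X _instX P Xv _instXv iv Ed φ hTS v₀ lam a₀ b₀ T₁ lamv B hML a ha
  obtain ⟨hTree, hGX, hPdist, hrange, hinj, hlip, hproper, hGv, hSv, hqc, hqi, hglue⟩ := hTS
  obtain ⟨hlamgeo, hlam0, hv₀T₁, hT₁eq, hBeq, hgeos, hparent⟩ := hML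
  have key : ∀ n : ℕ, ∀ v, v ∈ T₁ → Gr.dist v₀ v = n → ∀ x ∈ lamv v,
      ∃ y ∈ lam, dist (iv v x) (iv v₀ y) ≤ A * n := by
    intro n
    induction n using Nat.strong_induction_on with
    | _ n IH =>
      intro v hv hdv x hx
      by_cases hveq : v = v₀
      · subst hveq
        refine ⟨x, hlam0 ▸ hx, ?_⟩
        rw [dist_self]
        exact mul_nonneg hA0.le (Nat.cast_nonneg n)
      · obtain ⟨w, hadj, hwT₁, hdist1, p, hpE, q, hqE, hpC, hqC, hDq, hgeod⟩ :=
          hparent v hv hveq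
        obtain ⟨aw, bw, hlamw⟩ := hgeos w hwT₁
        obtain ⟨y', hy'mem, hy'd⟩ := per_level (XX := X) hδ hK hε hC₂ hC
          (iv v) (iv w) (hGv v) (hSv v) (hGv w) (hSv w)
          (Ed w v hadj) (hqc w v hadj) (φ w v hadj)
          (hqi w v hadj) (fun aa haa => (hglue w v hadj aa haa).2.2)
          (hlip v) (hlip w) (lamv w) aw bw hlamw p q hpE hqE hpC hqC
          (lamv v) hgeod x hx
        have hn1 : 1 ≤ n := by omega
        obtain ⟨y, hymem, hyd⟩ := IH (n - 1) (by omega) w hwT₁ (by omega) y' hy'mem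
        refine ⟨y, hymem, ?_⟩
        have hcast : ((n - 1 : ℕ):ℝ) = (n:ℝ) - 1 := by
          rw [Nat.cast_sub hn1, Nat.cast_one]
        have hAle : dist (iv v x) (iv w y') ≤ A := by rw [hA]; linarith
        rw [hcast] at hyd
        calc dist (iv v x) (iv v₀ y)
            ≤ dist (iv v x) (iv w y') + dist (iv w y') (iv v₀ y) := dist_triangle _ _ _
          _ ≤ A + A * ((n:ℝ) - 1) := by linarith
          _ = A * n := by ring
  rw [hBeq] at ha
  simp only [Set.mem_iUnion] at ha
  obtain ⟨v, hvT₁, x, hxmem, rfl⟩ := ha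
  obtain ⟨y, hymem, hyd⟩ := key (Gr.dist v₀ v) v hvT₁ rfl x hxmem
  refine ⟨iv v₀ y, ⟨y, hymem, rfl⟩, ?_⟩
  have hPa : P (iv v x) = v := by
    have h1 : iv v x ∈ Set.range (iv v) := ⟨x, rfl⟩
    rw [hrange v] at h1
    exact h1
  have hPb : P (iv v₀ y) = v₀ := by
    have h1 : iv v₀ y ∈ Set.range (iv v₀) := ⟨y, rfl⟩
    rw [hrange v₀] at h1
    exact h1
  rw [hPa, hPb, SimpleGraph.dist_comm]
  exact hyd

-- #print axioms check
end
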